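/- arXiv:2210.08320 — 3 statements merged into one kernel-verified Lean document; each statement's English description precedes it below -/
import Mathlib

section
/- Let n ≥ 3, let a, b ∈ ℝⁿ, let r, s ∈ [1/2, 2], and let 0 < δ < 1/2. Set d = |a−b| + |r−s|. Then the Lebesgue measure of the intersection of the δ-neighborhoods of the spheres S(a,r) and S(b,s) satisfies |S^δ(a,r) ∩ S^δ(b,s)| ≤ C(n) · δ² / (d + δ). -/
open MeasureTheory Metric Set
open scoped ENNReal NNReal

noncomputable section


lemma aux_pow (m : ℕ) (hm : 2 ≤ m) {a b : ℝ} (hb : 0 ≤ b) (hba : b ≤ a) (ha3 : a ≤ 3) :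
    a ^ m - b ^ m ≤ m * 3 ^ (m - 2) * (a ^ 2 - b ^ 2) := by
  have ha : 0 ≤ a := hb.trans hba
  have h1 : a ^ m - b ^ m = (∑ i ∈ Finset.range m, a ^ i * b ^ (m - 1 - i)) * (a - b) :=
    (geom_sum₂_mul a b m).symm
  have h2 : (∑ i ∈ Finset.range m, a ^ i * b ^ (m - 1 - i)) ≤ m * a ^ (m - 1) := by
    calc (∑ i ∈ Finset.range m, a ^ i * b ^ (m - 1 - i))
        ≤ ∑ _i ∈ Finset.range m, a ^ (m - 1) := by
          apply Finset.sum_le_sum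
          intro i hi
          have hi' : i < m := Finset.mem_range.mp hi
          calc a ^ i * b ^ (m - 1 - i) ≤ a ^ i * a ^ (m - 1 - i) := by
                exact mul_le_mul_of_nonneg_left (pow_le_pow_left₀ hb hba _) (pow_nonneg ha _)
            _ = a ^ (m - 1) := by
                rw [← pow_add]
                congr 1
                omega
      _ = m * a ^ (m - 1) := by simp [mul_comm]
  have hab : 0 ≤ a - b := sub_nonneg.mpr hba
  have h3 : a ^ m - b ^ m ≤ m * a ^ (m - 1) * (a - b) := by
    rw [h1]; exact mul_le_mul_of_nonneg_right h2 hab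
  have h4 : a ^ (m - 1) * (a - b) ≤ 3 ^ (m - 2) * (a ^ 2 - b ^ 2) := by
    have hm1 : m - 1 = (m - 2) + 1 := by omega
    rw [hm1, pow_succ]
    calc a ^ (m - 2) * a * (a - b) ≤ 3 ^ (m - 2) * (a * (a - b)) := by
          rw [mul_assoc]
          exact mul_le_mul_of_nonneg_right (pow_le_pow_left₀ ha ha3 _)
            (mul_nonneg ha hab)
      _ ≤ 3 ^ (m - 2) * (a ^ 2 - b ^ 2) := by
          apply mul_le_mul_of_nonneg_left _ (by positivity)
          nlinarith
  calc a ^ m - b ^ m ≤ m * a ^ (m - 1) * (a - b) := h3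
    _ = m * (a ^ (m-1) * (a-b)) := by ring
    _ ≤ m * (3 ^ (m - 2) * (a ^ 2 - b ^ 2)) := by
        exact mul_le_mul_of_nonneg_left h4 (by positivity)
    _ = m * 3 ^ (m - 2) * (a ^ 2 - b ^ 2) := by ring


lemma ann_le (k : ℕ) (hk : 2 ≤ k) (a : EuclideanSpace ℝ (Fin k)) {ρ₁ ρ₂ : ℝ}
    (h1 : 0 ≤ ρ₁) (h12 : ρ₁ ≤ ρ₂) :
    volume {x : EuclideanSpace ℝ (Fin k) | ρ₁ ≤ dist x a ∧ dist x a ≤ ρ₂} ≤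
      ENNReal.ofReal (ρ₂ ^ k - ρ₁ ^ k) * volume (closedBall (0 : EuclideanSpace ℝ (Fin k)) 1) := by
  haveI : Nontrivial (EuclideanSpace ℝ (Fin k)) :=
    Module.nontrivial_of_finrank_pos (R := ℝ)
      (by rw [finrank_euclideanSpace_fin]; omega)
  have hsub : {x : EuclideanSpace ℝ (Fin k) | ρ₁ ≤ dist x a ∧ dist x a ≤ ρ₂} ⊆
      closedBall a ρ₂ \ ball a ρ₁ := by
    rintro x ⟨hx1, hx2⟩
    exact ⟨mem_closedBall.mpr hx2, fun hx => absurd (mem_ball.mp hx) (not_lt.mpr hx1)⟩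
  refine (measure_mono hsub).trans ?_
  rw [measure_diff (ball_subset_closedBall.trans (closedBall_subset_closedBall h12))
    measurableSet_ball.nullMeasurableSet (measure_ball_lt_top).ne]
  rw [Measure.addHaar_closedBall volume a (h1.trans h12), Measure.addHaar_ball volume a h1,
    ← Measure.addHaar_closedBall_eq_addHaar_ball, finrank_euclideanSpace_fin]
  rw [← ENNReal.sub_mul (fun _ _ => (measure_closedBall_lt_top).ne),
    ← ENNReal.ofReal_sub _ (by positivity)]


lemma cross_le (m : ℕ) (hm : 2 ≤ m) {r δ t : ℝ} (hδ : 0 < δ) (hδ2 : δ < 1/2)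
    (hr : r ∈ Set.Icc (1/2 : ℝ) 2) :
    volume {y : Fin m → ℝ | (r - δ) ^ 2 - t ^ 2 ≤ ∑ i, y i ^ 2 ∧ ∑ i, y i ^ 2 ≤ (r + δ) ^ 2 - t ^ 2}
      ≤ ENNReal.ofReal (m * 3 ^ (m - 2) * (8 * δ)) *
        volume (closedBall (0 : EuclideanSpace ℝ (Fin m)) 1) := by
  have hcc : (r - δ) ^ 2 - t ^ 2 ≤ (r + δ) ^ 2 - t ^ 2 := by nlinarith [hr.1, hr.2]
  set ρ₁ : ℝ := Real.sqrt ((r - δ) ^ 2 - t ^ 2) with hρ₁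
  set ρ₂ : ℝ := Real.sqrt ((r + δ) ^ 2 - t ^ 2) with hρ₂
  -- transfer to Euclidean space
  have hmp := EuclideanSpace.volume_preserving_symm_measurableEquiv_toLp (Fin m)
  set S : Set (Fin m → ℝ) :=
    {y | (r - δ) ^ 2 - t ^ 2 ≤ ∑ i, y i ^ 2 ∧ ∑ i, y i ^ 2 ≤ (r + δ) ^ 2 - t ^ 2} with hS
  have hSm : MeasurableSet S := by
    have h : Measurable fun y : Fin m → ℝ => ∑ i, y i ^ 2 := by
      exact Finset.measurable_sum _ fun i _ => (measurable_pi_apply i).pow_const 2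
    exact (h measurableSet_Ici).inter (h measurableSet_Iic)
  have key : volume S =
      volume ((MeasurableEquiv.toLp 2 (Fin m → ℝ)).symm ⁻¹' S) :=
    (hmp.measure_preimage hSm.nullMeasurableSet).symm
  rw [key]
  have hsub : (MeasurableEquiv.toLp 2 (Fin m → ℝ)).symm ⁻¹' S ⊆
      {z : EuclideanSpace ℝ (Fin m) | ρ₁ ≤ dist z 0 ∧ dist z 0 ≤ ρ₂} := by
    rintro z ⟨hz1, hz2⟩
    have hz : ∑ i, ((MeasurableEquiv.toLp 2 (Fin m → ℝ)).symm z) i ^ 2 = ‖z‖ ^ 2 := by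
      rw [EuclideanSpace.norm_eq, Real.sq_sqrt (by positivity)]
      simp [MeasurableEquiv.coe_toLp_symm, Real.norm_eq_abs, sq_abs]
    rw [hz] at hz1 hz2
    have hn : (0:ℝ) ≤ ‖z‖ := norm_nonneg z
    rw [Set.mem_setOf_eq, dist_zero_right]
    constructor
    · calc ρ₁ ≤ Real.sqrt (‖z‖ ^ 2) := Real.sqrt_le_sqrt hz1
        _ = ‖z‖ := Real.sqrt_sq hn
    · calc ‖z‖ = Real.sqrt (‖z‖ ^ 2) := (Real.sqrt_sq hn).symm
        _ ≤ ρ₂ := Real.sqrt_le_sqrt hz2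
  refine (measure_mono hsub).trans ?_
  refine (ann_le m hm 0 (Real.sqrt_nonneg _) (Real.sqrt_le_sqrt hcc)).trans ?_
  refine mul_le_mul_left (ENNReal.ofReal_le_ofReal ?_) _
  -- ρ₂ ^ m - ρ₁ ^ m ≤ m * 3^(m-2) * 8δ
  have hρ2 : ρ₂ ≤ 3 := by
    calc ρ₂ ≤ Real.sqrt ((r + δ) ^ 2) := Real.sqrt_le_sqrt (by nlinarith)
      _ = r + δ := Real.sqrt_sq (by nlinarith [hr.1])
      _ ≤ 3 := by nlinarith [hr.2]
  have hρ12 : ρ₁ ≤ ρ₂ := Real.sqrt_le_sqrt hcc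
  have hsq : ρ₂ ^ 2 - ρ₁ ^ 2 ≤ 8 * δ := by
    rcases le_or_gt 0 ((r + δ) ^ 2 - t ^ 2) with h2 | h2
    · have e2 : ρ₂ ^ 2 = (r + δ) ^ 2 - t ^ 2 := Real.sq_sqrt h2
      rcases le_or_gt 0 ((r - δ) ^ 2 - t ^ 2) with h1 | h1
      · have e1 : ρ₁ ^ 2 = (r - δ) ^ 2 - t ^ 2 := Real.sq_sqrt h1
        rw [e1, e2]; nlinarith [hr.1, hr.2]
      · have e1 : ρ₁ = 0 := by rw [hρ₁, Real.sqrt_eq_zero_of_nonpos h1.le]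
        rw [e1, e2]; nlinarith [hr.1, hr.2]
    · have e2 : ρ₂ = 0 := by rw [hρ₂, Real.sqrt_eq_zero_of_nonpos h2.le]
      have e1 : ρ₁ = 0 := by
        rw [hρ₁, Real.sqrt_eq_zero_of_nonpos (by nlinarith [hr.1])]
      rw [e1, e2]; nlinarith
  calc ρ₂ ^ m - ρ₁ ^ m ≤ m * 3 ^ (m - 2) * (ρ₂ ^ 2 - ρ₁ ^ 2) :=
        aux_pow m hm (Real.sqrt_nonneg _) hρ12 hρ2
    _ ≤ m * 3 ^ (m - 2) * (8 * δ) := by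
        apply mul_le_mul_of_nonneg_left hsq (by positivity)

lemma slab_le (m : ℕ) (hm : 2 ≤ m) {r δ : ℝ} (l u : ℝ) (hδ : 0 < δ) (hδ2 : δ < 1/2)
    (hr : r ∈ Set.Icc (1/2 : ℝ) 2) :
    volume {x : EuclideanSpace ℝ (Fin (m+1)) |
        (r - δ ≤ ‖x‖ ∧ ‖x‖ ≤ r + δ) ∧ x 0 ∈ Set.Icc l u} ≤
      ENNReal.ofReal (m * 3 ^ (m - 2) * (8 * δ)) *
        volume (closedBall (0 : EuclideanSpace ℝ (Fin m)) 1) * ENNReal.ofReal (u - l) := by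
  set S : Set (EuclideanSpace ℝ (Fin (m+1))) :=
    {x | (r - δ ≤ ‖x‖ ∧ ‖x‖ ≤ r + δ) ∧ x 0 ∈ Set.Icc l u} with hSdef
  have hSm : MeasurableSet S := by
    have h1 : Measurable fun x : EuclideanSpace ℝ (Fin (m+1)) => ‖x‖ :=
      continuous_norm.measurable
    have h2 : Measurable fun x : EuclideanSpace ℝ (Fin (m+1)) => x 0 :=
      (PiLp.continuous_apply 2 _ (0 : Fin (m+1))).measurable
    exact (((h1 measurableSet_Ici).inter (h1 measurableSet_Iic)).inter (h2 measurableSet_Icc))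
  -- transfer to ℝ × (Fin m → ℝ)
  have mp1 := EuclideanSpace.volume_preserving_symm_measurableEquiv_toLp (Fin (m+1))
  have mp2 := MeasureTheory.volume_preserving_piFinSuccAbove (fun _ : Fin (m+1) => ℝ) 0
  set F : EuclideanSpace ℝ (Fin (m+1)) ≃ᵐ ℝ × (Fin m → ℝ) :=
    (MeasurableEquiv.toLp 2 (Fin (m+1) → ℝ)).symm.trans
      (MeasurableEquiv.piFinSuccAbove (fun _ : Fin (m+1) => ℝ) 0) with hF
  have mpF : MeasurePreserving F volume volume := mp2.comp mp1
  have key : volume S = volume (F.symm ⁻¹' S) :=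
    ((mpF.symm F).measure_preimage hSm.nullMeasurableSet).symm
  -- describe the preimage
  have hmem : ∀ t : ℝ, ∀ y : Fin m → ℝ, F.symm (t, y) ∈ S ↔
      ((r - δ ≤ Real.sqrt (t ^ 2 + ∑ i, y i ^ 2) ∧
        Real.sqrt (t ^ 2 + ∑ i, y i ^ 2) ≤ r + δ) ∧ t ∈ Set.Icc l u) := by
    intro t y
    have hx : ∀ j, (F.symm (t, y) : EuclideanSpace ℝ (Fin (m+1))) j
        = Fin.insertNth (α := fun _ : Fin (m+1) => ℝ) 0 t y j := by
      intro j
      simp [hF, MeasurableEquiv.trans, MeasurableEquiv.coe_toLp,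
        MeasurableEquiv.piFinSuccAbove]
    have hnorm : ‖(F.symm (t, y) : EuclideanSpace ℝ (Fin (m+1)))‖
        = Real.sqrt (t ^ 2 + ∑ i, y i ^ 2) := by
      rw [EuclideanSpace.norm_eq]
      congr 1
      rw [Fin.sum_univ_succAbove (fun j => ‖(F.symm (t, y) : EuclideanSpace ℝ (Fin (m+1))) j‖ ^ 2) 0]
      congr 1
      · rw [hx 0, Fin.insertNth_apply_same]; simp [sq_abs]
      · refine Finset.sum_congr rfl fun j _ => ?_
        rw [hx _, Fin.insertNth_apply_succAbove]; simp [sq_abs]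
    have h0 : (F.symm (t, y) : EuclideanSpace ℝ (Fin (m+1))) 0 = t := by
      rw [hx 0, Fin.insertNth_apply_same]
    constructor
    · rintro ⟨⟨u1, u2⟩, u3⟩
      rw [hnorm] at u1 u2; rw [h0] at u3; exact ⟨⟨u1, u2⟩, u3⟩
    · rintro ⟨⟨u1, u2⟩, u3⟩
      refine ⟨⟨?_, ?_⟩, ?_⟩ <;> [rw [hnorm]; rw [hnorm]; rw [h0]] <;> assumption
  rw [key]
  have hTm : MeasurableSet (F.symm ⁻¹' S) := F.symm.measurable hSm
  rw [show (volume : Measure (ℝ × (Fin m → ℝ))) = (volume : Measure ℝ).prod volume from rfl]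
  rw [Measure.prod_apply hTm]
  set M : ℝ≥0∞ := ENNReal.ofReal (m * 3 ^ (m - 2) * (8 * δ)) *
      volume (closedBall (0 : EuclideanSpace ℝ (Fin m)) 1) with hM
  have hbound : ∀ t : ℝ, volume (Prod.mk t ⁻¹' (F.symm ⁻¹' S)) ≤
      (Set.Icc l u).indicator (fun _ => M) t := by
    intro t
    rcases em (t ∈ Set.Icc l u) with ht | ht
    · rw [Set.indicator_of_mem ht]
      refine (measure_mono ?_).trans (cross_le m hm (t := t) hδ hδ2 hr)
      intro y hy
      have := (hmem t y).mp hy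
      obtain ⟨⟨u1, u2⟩, -⟩ := this
      have hsum : (0:ℝ) ≤ t ^ 2 + ∑ i, y i ^ 2 := by positivity
      have hrδ : 0 ≤ r - δ := by
        rcases hr with ⟨h1, _⟩; linarith
      constructor
      · nlinarith [Real.sq_sqrt hsum, Real.sqrt_nonneg (t ^ 2 + ∑ i, y i ^ 2)]
      · nlinarith [Real.sq_sqrt hsum, Real.sqrt_nonneg (t ^ 2 + ∑ i, y i ^ 2)]
    · rw [Set.indicator_of_notMem ht]
      have hsub : Prod.mk t ⁻¹' (F.symm ⁻¹' S) ⊆ (∅ : Set (Fin m → ℝ)) :=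
        fun y hy => (ht ((hmem t y).mp hy).2).elim
      exact le_trans (measure_mono hsub) (by simp)
  calc ∫⁻ t, volume (Prod.mk t ⁻¹' (F.symm ⁻¹' S)) ≤
        ∫⁻ t, (Set.Icc l u).indicator (fun _ => M) t := lintegral_mono hbound
    _ = M * volume (Set.Icc l u) := by
        rw [lintegral_indicator measurableSet_Icc]; simp [mul_comm]
    _ = M * ENNReal.ofReal (u - l) := by rw [Real.volume_Icc]

lemma interval_aux {c r s δ X W t : ℝ} (hc0 : 0 < c)
    (hsq : W^2 = X^2 - 2*(c*t) + c^2)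
    (hx2a : (r-δ)^2 ≤ X^2) (hx2b : X^2 ≤ (r+δ)^2)
    (hw2a : (s-δ)^2 ≤ W^2) (hw2b : W^2 ≤ (s+δ)^2) :
    (c^2 + (r-δ)^2 - (s+δ)^2)/(2*c) ≤ t ∧ t ≤ (c^2 + (r+δ)^2 - (s-δ)^2)/(2*c) := by
  constructor
  · rw [div_le_iff₀ (by positivity)]
    nlinarith
  · rw [le_div_iff₀ (by positivity)]
    nlinarith


lemma final_aux (K B2 C r s c d δ l u : ℝ) (hK : 0 ≤ K) (hB2n : 0 ≤ B2)
    (hδ : 0 < δ) (hdpos : 0 < d + δ) (hcase : 8 * δ < d) (hbig : d ≤ 4 * c)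
    (hr2 : r ≤ 2) (hs2 : s ≤ 2)
    (hul : (u - l) * (2 * c) = 4*r*δ + 4*s*δ) (huln : 0 ≤ u - l)
    (hC : 512 * K * B2 ≤ C) :
    K * (8 * δ) * B2 * (u - l) ≤ C * δ ^ 2 / (d + δ) := by
  rw [le_div_iff₀ hdpos]
  have step1 : (u - l) * (d + δ) ≤ (u - l) * (8 * c) :=
    mul_le_mul_of_nonneg_left (by linarith) huln
  have step2 : (u - l) * (8 * c) ≤ 64 * δ := by nlinarith
  have step3 : (u - l) * (d + δ) ≤ 64 * δ := step1.trans step2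
  calc K * (8 * δ) * B2 * (u - l) * (d + δ) = (K * B2 * δ * 8) * ((u - l) * (d + δ)) := by
        ring
    _ ≤ (K * B2 * δ * 8) * (64 * δ) := by
        apply mul_le_mul_of_nonneg_left step3 (by positivity)
    _ = (512 * K * B2) * δ ^ 2 := by ring
    _ ≤ C * δ ^ 2 := by nlinarith [sq_nonneg δ, mul_nonneg (mul_nonneg (by norm_num : (0:ℝ) ≤ 512) hK) hB2n]


set_option maxHeartbeats 1000000 in
/-- For `n ≥ 3` there is a constant `C = C(n)` such that for all
`a, b ∈ ℝⁿ`, radii `r, s ∈ [1/2, 2]` and `0 < δ < 1/2`, with `d = |a−b| + |r−s|`,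
`|S^δ(a,r) ∩ S^δ(b,s)| ≤ C · δ² / (d + δ)`. -/
theorem stmt2 (n : ℕ) (hn : 3 ≤ n) :
    ∃ C : ℝ, 0 < C ∧
      ∀ (a b : EuclideanSpace ℝ (Fin n)) (r s δ : ℝ),
        r ∈ Set.Icc (1/2 : ℝ) 2 → s ∈ Set.Icc (1/2 : ℝ) 2 →
        0 < δ → δ < 1/2 →
        volume ({x : EuclideanSpace ℝ (Fin n) | r - δ ≤ dist x a ∧ dist x a ≤ r + δ} ∩
                {x : EuclideanSpace ℝ (Fin n) | s - δ ≤ dist x b ∧ dist x b ≤ s + δ}) ≤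
          ENNReal.ofReal (C * δ ^ 2 / ((dist a b + |r - s|) + δ)) := by
  obtain ⟨m, rfl⟩ : ∃ m, n = m + 1 := ⟨n - 1, by omega⟩
  have hm : 2 ≤ m := by omega
  set B1 : ℝ := (volume (closedBall (0 : EuclideanSpace ℝ (Fin (m+1))) 1)).toReal with hB1def
  set B2 : ℝ := (volume (closedBall (0 : EuclideanSpace ℝ (Fin m)) 1)).toReal with hB2def
  have hB1 : volume (closedBall (0 : EuclideanSpace ℝ (Fin (m+1))) 1) = ENNReal.ofReal B1 :=
    (ENNReal.ofReal_toReal (measure_closedBall_lt_top).ne).symm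
  have hB2 : volume (closedBall (0 : EuclideanSpace ℝ (Fin m)) 1) = ENNReal.ofReal B2 :=
    (ENNReal.ofReal_toReal (measure_closedBall_lt_top).ne).symm
  have hB1n : 0 ≤ B1 := ENNReal.toReal_nonneg
  have hB2n : 0 ≤ B2 := ENNReal.toReal_nonneg
  set K1 : ℝ := (m+1) * 3 ^ (m - 1) * 8 with hK1def
  set K2 : ℝ := m * 3 ^ (m - 2) * 8 with hK2def
  clear_value B1 B2
  have hK1 : 0 < K1 := by positivity
  have hm0 : (0:ℝ) < m := by exact_mod_cast (by omega : 0 < m)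
  have hK2 : 0 < K2 := by
    exact mul_pos (mul_pos hm0 (by positivity)) (by norm_num)
  refine ⟨9 * (K1 * B1) + 64 * (K2 * B2) + 1, by positivity, ?_⟩
  intro a b r s δ hr hs hδ hδ2
  set C : ℝ := 9 * (K1 * B1) + 64 * (K2 * B2) + 1 with hCdef
  have hC : 0 < C := by positivity
  clear_value C
  set d : ℝ := dist a b + |r - s| with hd
  have hd0 : 0 ≤ d := add_nonneg dist_nonneg (abs_nonneg _)
  have hdpos : 0 < d + δ := by linarith
  have hrδ : 0 ≤ r - δ := by rcases hr with ⟨h1, _⟩; linarith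
  have hsδ : 0 ≤ s - δ := by rcases hs with ⟨h1, _⟩; linarith
  rcases le_or_gt d (8 * δ) with hcase | hcase
  · -- small d: use annulus bound
    refine (measure_mono (Set.inter_subset_left)).trans ?_
    refine (ann_le (m+1) (by omega) a (ρ₁ := r - δ) (ρ₂ := r + δ) hrδ (show r - δ ≤ r + δ by linarith)).trans ?_
    have hpow : (r + δ) ^ (m+1) - (r - δ) ^ (m+1) ≤ K1 * δ := by
      have h := aux_pow (m+1) (by omega) hrδ (show r - δ ≤ r + δ by linarith) (show r + δ ≤ 3 by nlinarith [hr.2])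
      have e : (m+1) - 2 = m - 1 := by omega
      rw [e] at h
      refine h.trans ?_
      push_cast
      calc ((m:ℝ)+1) * 3 ^ (m-1) * ((r + δ) ^ 2 - (r - δ) ^ 2)
          ≤ ((m:ℝ)+1) * 3 ^ (m-1) * (8 * δ) := by
            apply mul_le_mul_of_nonneg_left _ (by positivity)
            nlinarith [hr.2, hδ]
        _ = K1 * δ := by rw [hK1def]; push_cast; ring
    refine le_trans (mul_le_mul_left (ENNReal.ofReal_le_ofReal hpow) _) ?_
    rw [hB1, ← ENNReal.ofReal_mul (by positivity)]
    refine ENNReal.ofReal_le_ofReal ?_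
    rw [le_div_iff₀ hdpos]
    nlinarith [mul_nonneg (mul_nonneg hK1.le hδ.le) hB1n,
      mul_nonneg hK1.le hB1n, mul_nonneg hK2.le hB2n, sq_nonneg δ, hδ.le, hcase]
  · -- large d
    rcases lt_or_ge (4 * dist a b) d with hsmall | hbig
    · -- intersection is empty
      have hempty : ({x : EuclideanSpace ℝ (Fin (m+1)) | r - δ ≤ dist x a ∧ dist x a ≤ r + δ} ∩
          {x | s - δ ≤ dist x b ∧ dist x b ≤ s + δ}) ⊆ ∅ := by
        rintro x ⟨⟨h1, h2⟩, ⟨h3, h4⟩⟩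
        exfalso
        have htri : |dist x a - dist x b| ≤ dist a b := by
          have h := abs_dist_sub_le a b x
          rwa [dist_comm a x, dist_comm b x] at h
        have habs : |r - s| - |dist x a - dist x b| ≤ |(r - s) - (dist x a - dist x b)| :=
          abs_sub_abs_le_abs_sub _ _
        have h2δ : |(r - s) - (dist x a - dist x b)| ≤ 2 * δ := by
          rw [abs_le]; constructor <;> linarith
        have hrs : |r - s| = d - dist a b := by rw [hd]; ring
        linarith
      refine le_trans (measure_mono hempty) ?_
      simp only [measure_empty]
      exact zero_le
    · -- main transversality case
      set c : ℝ := dist a b with hc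
      clear_value d
      have hc0 : 0 < c := by
        linarith [hδ, hcase, hbig]
      set v : EuclideanSpace ℝ (Fin (m+1)) := b - a with hv
      have hvnorm : ‖v‖ = c := by rw [hv, hc, dist_comm, dist_eq_norm]
      set e₀ : EuclideanSpace ℝ (Fin (m+1)) := EuclideanSpace.single (0 : Fin (m+1)) (1:ℝ)
        with he₀
      set w : EuclideanSpace ℝ (Fin (m+1)) := c • e₀ with hw
      have hwnorm : ‖w‖ = c := by
        rw [hw, norm_smul, he₀, EuclideanSpace.norm_single]
        simp [abs_of_nonneg hc0.le]
      set ρ : EuclideanSpace ℝ (Fin (m+1)) ≃ₗᵢ[ℝ] EuclideanSpace ℝ (Fin (m+1)) :=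
        Submodule.reflection (ℝ ∙ (w - v))ᗮ with hρ
      have hρw : ρ w = v := Submodule.reflection_sub (by rw [hwnorm, hvnorm])
      have mp : MeasurePreserving (fun x : EuclideanSpace ℝ (Fin (m+1)) => (ρ x) + a)
          volume volume :=
        (measurePreserving_add_right volume a).comp ρ.measurePreserving
      set A : Set (EuclideanSpace ℝ (Fin (m+1))) :=
        {x | r - δ ≤ dist x a ∧ dist x a ≤ r + δ} with hA
      set B : Set (EuclideanSpace ℝ (Fin (m+1))) :=
        {x | s - δ ≤ dist x b ∧ dist x b ≤ s + δ} with hB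
      have hmeas : MeasurableSet (A ∩ B) := by
        have h1 : Measurable fun x : EuclideanSpace ℝ (Fin (m+1)) => dist x a :=
          (continuous_id.dist continuous_const).measurable
        have h2 : Measurable fun x : EuclideanSpace ℝ (Fin (m+1)) => dist x b :=
          (continuous_id.dist continuous_const).measurable
        exact ((h1 measurableSet_Ici).inter (h1 measurableSet_Iic)).inter
          ((h2 measurableSet_Ici).inter (h2 measurableSet_Iic))
      have key : volume (A ∩ B) = volume ((fun x => (ρ x) + a) ⁻¹' (A ∩ B)) :=
        (mp.measure_preimage hmeas.nullMeasurableSet).symm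
      rw [key]
      set l : ℝ := (c^2 + (r-δ)^2 - (s+δ)^2) / (2*c) with hl
      set u : ℝ := (c^2 + (r+δ)^2 - (s-δ)^2) / (2*c) with hu
      have hsub : (fun x => (ρ x) + a) ⁻¹' (A ∩ B) ⊆
          {x : EuclideanSpace ℝ (Fin (m+1)) |
            (r - δ ≤ ‖x‖ ∧ ‖x‖ ≤ r + δ) ∧ x 0 ∈ Set.Icc l u} := by
        rintro x ⟨⟨h1, h2⟩, h3, h4⟩
        have hda : dist ((ρ x) + a) a = ‖x‖ := by
          rw [dist_eq_norm, add_sub_cancel_right, ρ.norm_map]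
        have hdb : dist ((ρ x) + a) b = ‖x - w‖ := by
          rw [dist_eq_norm]
          have : (ρ x) + a - b = ρ x - v := by rw [hv]; abel
          rw [this, ← hρw, ← ρ.map_sub, ρ.norm_map]
        rw [hda] at h1 h2
        rw [hdb] at h3 h4
        have hinner : (inner ℝ x w : ℝ) = c * x 0 := by
          rw [hw, real_inner_smul_right, he₀]
          congr 1
          have := EuclideanSpace.inner_single_right (𝕜 := ℝ) (0 : Fin (m+1)) (1:ℝ) x
          simpa using this
        have hsq : ‖x - w‖^2 = ‖x‖^2 - 2*(c * x 0) + c^2 := by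
          rw [norm_sub_sq_real, hinner, hwnorm]
        have hx2a : (r - δ)^2 ≤ ‖x‖^2 := by nlinarith [norm_nonneg x]
        have hx2b : ‖x‖^2 ≤ (r + δ)^2 := by nlinarith [norm_nonneg x]
        have hw2a : (s - δ)^2 ≤ ‖x - w‖^2 := by nlinarith [norm_nonneg (x - w)]
        have hw2b : ‖x - w‖^2 ≤ (s + δ)^2 := by nlinarith [norm_nonneg (x - w)]
        exact ⟨⟨h1, h2⟩, interval_aux hc0 hsq hx2a hx2b hw2a hw2b⟩
      clear_value A B
      refine (measure_mono hsub).trans ?_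
      refine (slab_le m hm l u hδ hδ2 hr).trans ?_
      rw [hB2, ← ENNReal.ofReal_mul (by positivity), ← ENNReal.ofReal_mul (by positivity)]
      refine ENNReal.ofReal_le_ofReal ?_
      have hul : (u - l) * (2*c) = 4*r*δ + 4*s*δ := by
        rw [hu, hl]; field_simp; ring
      have huln : 0 ≤ u - l := by
        rw [hu, hl, ← sub_div]
        apply div_nonneg _ (by positivity)
        nlinarith [hr.1, hs.1, hδ]
      refine final_aux ((m:ℝ) * 3 ^ (m-2)) B2 C r s c d δ l u
        (by positivity) hB2n hδ hdpos hcase hbig hr.2 hs.2 hul huln ?_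
      have h9 : 0 ≤ 9 * (K1 * B1) := by positivity
      rw [hCdef, hK2def]
      linarith
end
end

section
/- There exist absolute constants c₁, c₂ > 0 such that: if n ≥ 3, a₁, a₂, a₃ ∈ ℝⁿ are distinct points, 0 < δ < 1/2, and the circumradius R of the triangle a₁a₂a₃ satisfies R ≥ 2, and c₁·δ^{1/2} ≤ m ≤ M ≤ c₂ where M and m are the longest and shortest side lengths of the triangle, then the intersection of the δ-neighborhoods of the three unit spheres centered at a₁, a₂, a₃ is empty. -/
open MeasureTheory Metric Set
open scoped ENNReal NNReal

noncomputable section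



private lemma sq_three (P D Z B1 B2 B3 : ℝ) (h1 : P^2 ≤ B1) (h2 : D^2 ≤ B2) (h3 : Z^2 ≤ B3) :
    (P - D - Z)^2 ≤ 3*B1 + 3*B2 + 3*B3 := by
  nlinarith only [h1, h2, h3, sq_nonneg (P+D), sq_nonneg (P+Z), sq_nonneg (D-Z)]

private lemma sq_two (X Q B1 B2 : ℝ) (h1 : X^2 ≤ B1) (h2 : Q^2 ≤ B2) :
    (X - Q)^2 ≤ 2*B1 + 2*B2 := by
  nlinarith only [h1, h2, sq_nonneg (X+Q)]

lemma lemA (δ p q r a b c : ℝ)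
    (hδ0 : 0 < δ)
    (hp1 : p ≤ 1)
    (hq : 10000*δ ≤ q) (hs : 10000*δ ≤ p + q - 2*r) (hp : 10000*δ ≤ p)
    (hc : c ≤ 9/4)
    (hca : a^2 ≤ c*p)
    (h1a : p - 2*a ≤ 4*δ) (h1b : -(4*δ) ≤ p - 2*a)
    (h2a : q - 2*b ≤ 4*δ) (h2b : -(4*δ) ≤ q - 2*b)
    (hΔ : 0 ≤ p*q - r^2)
    (hdet : (a*r - b*p)^2 ≤ (c*p - a^2)*(p*q - r^2)) :
    64*δ^2*p ≤ p*q - r^2 := by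
  by_contra hcon
  push_neg at hcon
  have hδ4 : δ ≤ 1/10000 := by linarith
  have hp0 : 0 < p := by linarith
  have hca0 : 0 ≤ c*p - a^2 := by linarith [sq_nonneg a]
  have har : (a*r - b*p)^2 ≤ 144*δ^2*p^2 := by
    have t1 : c*p - a^2 ≤ 9/4*p := by nlinarith only [hc, hp0, sq_nonneg a]
    calc (a*r - b*p)^2 ≤ (c*p - a^2)*(p*q - r^2) := hdet
      _ ≤ (9/4*p)*(64*δ^2*p) := by
          apply mul_le_mul t1 hcon.le hΔ (by positivity)
      _ = 144*δ^2*p^2 := by ring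
  have e2 : (q - 2*b)^2 ≤ 16*δ^2 := by nlinarith only [h2a, h2b, hδ0]
  have e1 : (p - 2*a)^2 ≤ 16*δ^2 := by nlinarith only [h1a, h1b, hδ0]
  have hP2 : (p*(q - 2*b))^2 ≤ 16*δ^2*p^2 := by
    have h := mul_le_mul_of_nonneg_left e2 (sq_nonneg p)
    calc (p*(q - 2*b))^2 = p^2*(q-2*b)^2 := by ring
      _ ≤ p^2*(16*δ^2) := h
      _ = 16*δ^2*p^2 := by ring
  have hD2 : (p*q - r^2)^2 ≤ δ^2*p^2 := by
    have h64 : (p*q - r^2)^2 ≤ (64*δ^2*p)^2 := by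
      calc (p*q - r^2)^2 = (p*q-r^2)*(p*q-r^2) := by ring
        _ ≤ (64*δ^2*p)*(64*δ^2*p) := mul_le_mul hcon.le hcon.le hΔ (by positivity)
        _ = (64*δ^2*p)^2 := by ring
    have h65 : (64*δ^2*p)^2 ≤ δ^2*p^2 := by
      nlinarith only [mul_nonneg (mul_nonneg (sq_nonneg δ) (sq_nonneg p))
        (show (0:ℝ) ≤ 1 - 4096*δ^2 by nlinarith only [hδ4, hδ0])]
    linarith
  have hZ2 : (2*(a*r - b*p))^2 ≤ 576*δ^2*p^2 := by nlinarith only [har]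
  have hX2 : (r^2 - 2*a*r)^2 ≤ 1779*δ^2*p^2 := by
    have h := sq_three (p*(q-2*b)) (p*q - r^2) (2*(a*r - b*p))
      (16*δ^2*p^2) (δ^2*p^2) (576*δ^2*p^2) hP2 hD2 hZ2
    have hid : (p*(q-2*b)) - (p*q - r^2) - (2*(a*r - b*p)) = r^2 - 2*a*r := by ring
    rw [hid] at h
    linarith only [h]
  have h64d : 64*δ^2*p ≤ δ*p := by nlinarith only [mul_pos hδ0 hp0, hδ4, hδ0, hp0]
  have hpq : 10000*δ*p ≤ p*q := by
    have h := mul_le_mul_of_nonneg_left hq hp0.le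
    linarith only [h]
  have hr2 : 9999*δ*p ≤ r^2 := by linarith only [hpq, hcon, h64d, mul_pos hδ0 hp0]
  have ha49 : (p - 4*δ)/2 ≤ a := by linarith only [h1a]
  have hpδ : 4*δ ≤ (4/10000)*p := by linarith only [hp]
  have hv0 : (0:ℝ) ≤ (p - 4*δ)/2 := by linarith only [hpδ, hp0]
  have h9 : (999/1000)*p^2 ≤ (p - 4*δ)^2 := by
    nlinarith only [mul_le_mul (show (9996/10000 : ℝ)*p ≤ p - 4*δ by linarith only [hpδ])
      (show (9996/10000:ℝ)*p ≤ p - 4*δ by linarith only [hpδ])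
      (by positivity : (0:ℝ) ≤ (9996/10000:ℝ)*p) (show (0:ℝ) ≤ p - 4*δ by linarith only [hpδ, hp0])]
  have hpT : (0:ℝ) < p*(δ*p^2) := by positivity
  have hk3gen : δ*(δ*p^2) ≤ (1/10000)*(p*(δ*p^2)) := by
    have h := mul_le_mul_of_nonneg_right (show δ ≤ p/10000 by linarith only [hp])
      (show (0:ℝ) ≤ δ*p^2 by positivity)
    linarith only [h]
  rcases le_total r a with hra | hra
  · -- case r ≤ a
    have h2ar : (p - 4*δ)/2 ≤ 2*a - r := by linarith only [ha49, hra]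
    have hB : ((p - 4*δ)/2)^2 ≤ (r - 2*a)^2 := by
      calc ((p - 4*δ)/2)^2 = ((p - 4*δ)/2)*((p - 4*δ)/2) := by ring
        _ ≤ (2*a - r)*(2*a - r) := mul_le_mul h2ar h2ar hv0 (by linarith only [h2ar, hv0])
        _ = (r - 2*a)^2 := by ring
    have hX2lo : (9999*δ*p) * (((p - 4*δ)/2)^2) ≤ (r^2 - 2*a*r)^2 := by
      calc (9999*δ*p) * (((p - 4*δ)/2)^2) ≤ r^2 * ((r - 2*a)^2) :=
            mul_le_mul hr2 hB (by positivity) (sq_nonneg r)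
        _ = (r^2 - 2*a*r)^2 := by ring
    have k2 : 2494*(p*(δ*p^2)) ≤ (r^2 - 2*a*r)^2 := by
      have h99 := mul_le_mul_of_nonneg_left h9 (show (0:ℝ) ≤ 9999*δ*p/4 by positivity)
      have hre : (9999*δ*p) * (((p - 4*δ)/2)^2) = 9999*δ*p/4 * ((p-4*δ)^2) := by ring
      rw [hre] at hX2lo
      linarith only [h99, hX2lo, hpT]
    have k3 : 1779*δ^2*p^2 ≤ (1779/10000)*(p*(δ*p^2)) := by linarith only [hk3gen]
    linarith only [hX2, k2, k3, hpT]
  · -- case a ≤ r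
    have hrp2 : 9999*δ*p ≤ (r - p)^2 := by
      have hps := mul_le_mul_of_nonneg_left hs hp0.le
      have hid : (r-p)^2 = p*(p+q-2*r) - (p*q - r^2) := by ring
      linarith only [hps, hid, h64d, hcon, mul_pos hδ0 hp0]
    have hsum : (p - 4*δ)/2 ≤ r + p - 2*a := by linarith only [hra, h1b]
    have hB : ((p - 4*δ)/2)^2 ≤ (r + p - 2*a)^2 := by
      calc ((p - 4*δ)/2)^2 = ((p - 4*δ)/2)*((p - 4*δ)/2) := by ring
        _ ≤ (r + p - 2*a)*(r + p - 2*a) := mul_le_mul hsum hsum hv0 (by linarith only [hsum, hv0])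
        _ = (r + p - 2*a)^2 := by ring
    have hQ2 : (p*(p - 2*a))^2 ≤ 16*δ^2*p^2 := by
      have h := mul_le_mul_of_nonneg_left e1 (sq_nonneg p)
      calc (p*(p - 2*a))^2 = p^2*(p-2*a)^2 := by ring
        _ ≤ p^2*(16*δ^2) := h
        _ = 16*δ^2*p^2 := by ring
    have hX'2 : ((r-p)*(r+p-2*a))^2 ≤ 3590*δ^2*p^2 := by
      have h := sq_two (r^2 - 2*a*r) (p*(p-2*a)) (1779*δ^2*p^2) (16*δ^2*p^2) hX2 hQ2
      have hid : (r^2 - 2*a*r) - (p*(p-2*a)) = (r-p)*(r+p-2*a) := by ring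
      rw [hid] at h
      linarith only [h]
    have hX'lo : (9999*δ*p) * (((p - 4*δ)/2)^2) ≤ ((r-p)*(r+p-2*a))^2 := by
      calc (9999*δ*p) * (((p - 4*δ)/2)^2) ≤ ((r-p)^2) * ((r+p-2*a)^2) :=
            mul_le_mul hrp2 hB (by positivity) (sq_nonneg (r-p))
        _ = ((r-p)*(r+p-2*a))^2 := by ring
    have k2 : 2494*(p*(δ*p^2)) ≤ ((r-p)*(r+p-2*a))^2 := by
      have h99 := mul_le_mul_of_nonneg_left h9 (show (0:ℝ) ≤ 9999*δ*p/4 by positivity)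
      have hre : (9999*δ*p) * (((p - 4*δ)/2)^2) = 9999*δ*p/4 * ((p-4*δ)^2) := by ring
      rw [hre] at hX'lo
      linarith only [h99, hX'lo, hpT]
    have k3 : 3590*δ^2*p^2 ≤ (3590/10000)*(p*(δ*p^2)) := by linarith only [hk3gen]
    linarith only [hX'2, k2, k3, hpT]


open scoped InnerProductSpace

section
variable {n : ℕ}

private lemma expand_norm (e f w : EuclideanSpace ℝ (Fin n)) (α β : ℝ) :
    ‖w + α • e + β • f‖^2 = ⟪w,w⟫_ℝ + α^2*⟪e,e⟫_ℝ + β^2*⟪f,f⟫_ℝ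
      + 2*(α*⟪w,e⟫_ℝ) + 2*(β*⟪w,f⟫_ℝ) + 2*(α*β*⟪e,f⟫_ℝ) := by
  rw [← real_inner_self_eq_norm_sq]
  simp only [inner_add_left, inner_add_right, real_inner_smul_left, real_inner_smul_right]
  rw [real_inner_comm e w, real_inner_comm f w, real_inner_comm f e]
  ring

private lemma expand_norm2 (e f : EuclideanSpace ℝ (Fin n)) (α β : ℝ) :
    ‖α • e + β • f‖^2 = α^2*⟪e,e⟫_ℝ + β^2*⟪f,f⟫_ℝ + 2*(α*β*⟪e,f⟫_ℝ) := by
  have h := expand_norm e f 0 α β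
  simpa using h

private lemma expand_sub (u v : EuclideanSpace ℝ (Fin n)) :
    ‖u - v‖^2 = ⟪u,u⟫_ℝ - 2*⟪u,v⟫_ℝ + ⟪v,v⟫_ℝ := by
  rw [← real_inner_self_eq_norm_sq]
  simp only [inner_sub_left, inner_sub_right]
  rw [real_inner_comm v u]
  ring

private lemma pf1 (e f w : EuclideanSpace ℝ (Fin n)) (p a r : ℝ) :
    ⟪p•w - a•e, p•f - r•e⟫_ℝ = p*p*⟪w,f⟫_ℝ - p*r*⟪w,e⟫_ℝ - a*p*⟪e,f⟫_ℝ + a*r*⟪e,e⟫_ℝ := by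
  simp only [inner_sub_left, inner_sub_right, real_inner_smul_left, real_inner_smul_right]
  rw [real_inner_comm e w, real_inner_comm f e]
  ring

private lemma pf2 (e w : EuclideanSpace ℝ (Fin n)) (p a : ℝ) :
    ⟪p•w - a•e, p•w - a•e⟫_ℝ = p*p*⟪w,w⟫_ℝ - 2*(p*a*⟪w,e⟫_ℝ) + a*a*⟪e,e⟫_ℝ := by
  simp only [inner_sub_left, inner_sub_right, real_inner_smul_left, real_inner_smul_right]
  rw [real_inner_comm e w]
  ring

private lemma pf3 (e f : EuclideanSpace ℝ (Fin n)) (p r : ℝ) :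
    ⟪p•f - r•e, p•f - r•e⟫_ℝ = p*p*⟪f,f⟫_ℝ - 2*(p*r*⟪e,f⟫_ℝ) + r*r*⟪e,e⟫_ℝ := by
  simp only [inner_sub_left, inner_sub_right, real_inner_smul_left, real_inner_smul_right]
  rw [real_inner_comm f e]
  ring

set_option maxHeartbeats 1600000 in
lemma core (b₁ b₂ b₃ x : EuclideanSpace ℝ (Fin n)) (δ : ℝ)
    (hδ0 : 0 < δ) (hδ : δ < 1/2)
    (heq : ∀ o : EuclideanSpace ℝ (Fin n),
      dist o b₁ = dist o b₂ → dist o b₂ = dist o b₃ → 2 ≤ dist o b₁)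
    (hbase1 : dist b₁ b₂ ≤ dist b₁ b₃) (hbase2 : dist b₂ b₃ ≤ dist b₁ b₃)
    (hμq : 100 * Real.sqrt δ ≤ dist b₁ b₂) (hμs : 100 * Real.sqrt δ ≤ dist b₂ b₃)
    (hM : dist b₁ b₃ ≤ 1)
    (hx1 : 1 - δ ≤ dist x b₁) (hx1' : dist x b₁ ≤ 1 + δ)
    (hx2 : 1 - δ ≤ dist x b₂) (hx2' : dist x b₂ ≤ 1 + δ)
    (hx3 : 1 - δ ≤ dist x b₃) (hx3' : dist x b₃ ≤ 1 + δ) : False := by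
  have hδ1 : 0 ≤ 1 - δ := by linarith
  obtain ⟨e, he⟩ : ∃ v : EuclideanSpace ℝ (Fin n), v = b₃ - b₁ := ⟨_, rfl⟩
  obtain ⟨f, hf⟩ : ∃ v : EuclideanSpace ℝ (Fin n), v = b₂ - b₁ := ⟨_, rfl⟩
  obtain ⟨w, hw⟩ : ∃ v : EuclideanSpace ℝ (Fin n), v = x - b₁ := ⟨_, rfl⟩
  obtain ⟨p, hp⟩ : ∃ t : ℝ, t = ⟪e,e⟫_ℝ := ⟨_, rfl⟩
  obtain ⟨q, hq⟩ : ∃ t : ℝ, t = ⟪f,f⟫_ℝ := ⟨_, rfl⟩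
  obtain ⟨r, hr⟩ : ∃ t : ℝ, t = ⟪e,f⟫_ℝ := ⟨_, rfl⟩
  obtain ⟨a, ha⟩ : ∃ t : ℝ, t = ⟪w,e⟫_ℝ := ⟨_, rfl⟩
  obtain ⟨b, hb⟩ : ∃ t : ℝ, t = ⟪w,f⟫_ℝ := ⟨_, rfl⟩
  obtain ⟨c, hc⟩ : ∃ t : ℝ, t = ⟪w,w⟫_ℝ := ⟨_, rfl⟩
  -- squared distances
  have hd1 : dist x b₁ ^ 2 = c := by
    rw [dist_eq_norm, hc, real_inner_self_eq_norm_sq, hw]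
  have hd2 : dist x b₂ ^ 2 = q - 2*b + c := by
    rw [dist_eq_norm]
    have hv : x - b₂ = w - f := by rw [hw, hf]; abel
    rw [hv, expand_sub, hq, hb, hc]
    ring
  have hd3 : dist x b₃ ^ 2 = p - 2*a + c := by
    rw [dist_eq_norm]
    have hv : x - b₃ = w - e := by rw [hw, he]; abel
    rw [hv, expand_sub, hp, ha, hc]
    ring
  have hs12 : dist b₁ b₂ ^ 2 = q := by
    rw [dist_comm, dist_eq_norm, hq, real_inner_self_eq_norm_sq, hf]
  have hs13 : dist b₁ b₃ ^ 2 = p := by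
    rw [dist_comm, dist_eq_norm, hp, real_inner_self_eq_norm_sq, he]
  have hs23 : dist b₂ b₃ ^ 2 = p + q - 2*r := by
    rw [dist_comm, dist_eq_norm]
    have hv : b₃ - b₂ = e - f := by rw [he, hf]; abel
    rw [hv, expand_sub, hp, hq, hr]
    ring
  -- numeric scalar facts
  have hsq : (100 * Real.sqrt δ)^2 = 10000*δ := by
    rw [mul_pow, Real.sq_sqrt hδ0.le]; norm_num
  have hq10 : 10000*δ ≤ q := by
    rw [← hsq, ← hs12]; exact pow_le_pow_left₀ (by positivity) hμq 2
  have hs10 : 10000*δ ≤ p + q - 2*r := by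
    rw [← hsq, ← hs23]; exact pow_le_pow_left₀ (by positivity) hμs 2
  have hμp : 100 * Real.sqrt δ ≤ dist b₁ b₃ := le_trans hμq hbase1
  have hp10 : 10000*δ ≤ p := by
    rw [← hsq, ← hs13]; exact pow_le_pow_left₀ (by positivity) hμp 2
  have hp0 : 0 < p := by linarith only [hp10, hδ0]
  have hp1 : p ≤ 1 := by
    rw [← hs13]
    calc dist b₁ b₃ ^2 ≤ 1^2 := pow_le_pow_left₀ dist_nonneg hM 2
      _ = 1 := one_pow 2
  have hqp : q ≤ p := by
    rw [← hs12, ← hs13]; exact pow_le_pow_left₀ dist_nonneg hbase1 2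
  have hclo : (1-δ)^2 ≤ c := by rw [← hd1]; exact pow_le_pow_left₀ hδ1 hx1 2
  have hchi : c ≤ (1+δ)^2 := by rw [← hd1]; exact pow_le_pow_left₀ dist_nonneg hx1' 2
  have hc2lo : (1-δ)^2 ≤ q - 2*b + c := by rw [← hd2]; exact pow_le_pow_left₀ hδ1 hx2 2
  have hc2hi : q - 2*b + c ≤ (1+δ)^2 := by rw [← hd2]; exact pow_le_pow_left₀ dist_nonneg hx2' 2
  have hc3lo : (1-δ)^2 ≤ p - 2*a + c := by rw [← hd3]; exact pow_le_pow_left₀ hδ1 hx3 2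
  have hc3hi : p - 2*a + c ≤ (1+δ)^2 := by rw [← hd3]; exact pow_le_pow_left₀ dist_nonneg hx3' 2
  have hc94 : c ≤ 9/4 := by nlinarith only [hchi, hδ, hδ0]
  have h1a : p - 2*a ≤ 4*δ := by nlinarith only [hc3hi, hclo]
  have h1b : -(4*δ) ≤ p - 2*a := by nlinarith only [hc3lo, hchi]
  have h2a : q - 2*b ≤ 4*δ := by nlinarith only [hc2hi, hclo]
  have h2b : -(4*δ) ≤ q - 2*b := by nlinarith only [hc2lo, hchi]
  -- Cauchy-Schwarz facts
  have hca : a^2 ≤ c*p := by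
    have h := real_inner_mul_inner_self_le w e
    rw [← ha, ← hc, ← hp] at h
    linarith only [h]
  have hΔ : 0 ≤ p*q - r^2 := by
    have h := real_inner_mul_inner_self_le e f
    rw [← hr, ← hp, ← hq] at h
    nlinarith only [h]
  have hdet : (a*r - b*p)^2 ≤ (c*p - a^2)*(p*q - r^2) := by
    have h := real_inner_mul_inner_self_le (p • w - a • e) (p • f - r • e)
    have h1 : ⟪p • w - a • e, p • f - r • e⟫_ℝ = p*(p*b - a*r) := by
      rw [pf1, ← hp, ← hr, ← ha, ← hb]; ring
    have h2 : ⟪p • w - a • e, p • w - a • e⟫_ℝ = p*(p*c - a^2) := by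
      rw [pf2, ← hp, ← ha, ← hc]; ring
    have h3 : ⟪p • f - r • e, p • f - r • e⟫_ℝ = p*(p*q - r^2) := by
      rw [pf3, ← hp, ← hq, ← hr]; ring
    rw [h1, h2, h3] at h
    have hp2 : (0:ℝ) < p^2 := by positivity
    have h4 : p^2*((a*r - b*p)^2) ≤ p^2*((c*p - a^2)*(p*q - r^2)) := by linarith only [h]
    exact le_of_mul_le_mul_left (by linarith [h4]) hp2
  -- apply the scalar lemma
  have hlemA := lemA δ p q r a b c hδ0 hp1 hq10 hs10 hp10 hc94 hca h1a h1b h2a h2b hΔ hdet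
  have hΔpos : 0 < p*q - r^2 := lt_of_lt_of_le (by positivity) hlemA
  have hΔne : p*q - r^2 ≠ 0 := ne_of_gt hΔpos
  -- construct the equidistant point y
  obtain ⟨ε₁, hε₁⟩ : ∃ t : ℝ, t = p/2 - a := ⟨_, rfl⟩
  obtain ⟨ε₂, hε₂⟩ : ∃ t : ℝ, t = q/2 - b := ⟨_, rfl⟩
  obtain ⟨s₀, hs₀⟩ : ∃ t : ℝ, t = (q*ε₁ - r*ε₂)/(p*q - r^2) := ⟨_, rfl⟩
  obtain ⟨t₀, ht₀⟩ : ∃ t : ℝ, t = (p*ε₂ - r*ε₁)/(p*q - r^2) := ⟨_, rfl⟩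
  have hst1 : s₀*p + t₀*r = ε₁ := by
    rw [hs₀, ht₀]; simp only [div_eq_mul_inv]; linear_combination ε₁ * mul_inv_cancel₀ hΔne
  have hst2 : s₀*r + t₀*q = ε₂ := by
    rw [hs₀, ht₀]; simp only [div_eq_mul_inv]; linear_combination ε₂ * mul_inv_cancel₀ hΔne
  obtain ⟨y, hy⟩ : ∃ v : EuclideanSpace ℝ (Fin n), v = x + s₀ • e + t₀ • f := ⟨_, rfl⟩
  have hyb1 : y - b₁ = w + s₀ • e + t₀ • f := by
    rw [hy, hw]; abel
  have hyb2 : y - b₂ = w + s₀ • e + (t₀ - 1) • f := by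
    rw [hy, hw, sub_smul, one_smul, hf]; abel
  have hyb3 : y - b₃ = w + (s₀ - 1) • e + t₀ • f := by
    rw [hy, hw, sub_smul, one_smul, he]; abel
  have hsq1 : dist y b₁ ^ 2 = c + s₀^2*p + t₀^2*q + 2*(s₀*a) + 2*(t₀*b) + 2*(s₀*t₀*r) := by
    rw [dist_eq_norm, hyb1, expand_norm, ← hp, ← hq, ← hr, ← ha, ← hb, ← hc]
  have hsq2 : dist y b₂ ^ 2 = c + s₀^2*p + (t₀-1)^2*q + 2*(s₀*a) + 2*((t₀-1)*b) + 2*(s₀*(t₀-1)*r) := by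
    rw [dist_eq_norm, hyb2, expand_norm, ← hp, ← hq, ← hr, ← ha, ← hb, ← hc]
  have hsq3 : dist y b₃ ^ 2 = c + (s₀-1)^2*p + t₀^2*q + 2*((s₀-1)*a) + 2*(t₀*b) + 2*((s₀-1)*t₀*r) := by
    rw [dist_eq_norm, hyb3, expand_norm, ← hp, ← hq, ← hr, ← ha, ← hb, ← hc]
  have heq12 : dist y b₁ = dist y b₂ := by
    have h : dist y b₁ ^2 = dist y b₂ ^2 := by
      rw [hsq1, hsq2]; linear_combination (2:ℝ)*hst2 + (2:ℝ)*hε₂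
    rw [← Real.sqrt_sq (dist_nonneg (x := y) (y := b₁)),
        ← Real.sqrt_sq (dist_nonneg (x := y) (y := b₂)), h]
  have heq23 : dist y b₂ = dist y b₃ := by
    have h : dist y b₂ ^2 = dist y b₃ ^2 := by
      rw [hsq2, hsq3]; linear_combination (2:ℝ)*hst1 - (2:ℝ)*hst2 + (2:ℝ)*hε₁ - (2:ℝ)*hε₂
    rw [← Real.sqrt_sq (dist_nonneg (x := y) (y := b₂)),
        ← Real.sqrt_sq (dist_nonneg (x := y) (y := b₃)), h]
  have h2le : 2 ≤ dist y b₁ := heq y heq12 heq23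
  -- distance bound
  have hyx : dist y x = ‖s₀ • e + t₀ • f‖ := by
    rw [dist_eq_norm]
    congr 1
    rw [hy]; abel
  have hexp2 : ‖s₀ • e + t₀ • f‖^2 = s₀^2*p + t₀^2*q + 2*(s₀*t₀*r) := by
    rw [expand_norm2, ← hp, ← hq, ← hr]
  have hrle : r ≤ p ∧ -p ≤ r := by
    have hr2 : r^2 ≤ p^2 := by
      nlinarith only [hΔ, mul_le_mul_of_nonneg_left hqp hp0.le]
    constructor <;> nlinarith only [hr2, hp0]
  have hε₁sq : ε₁^2 ≤ 4*δ^2 := by rw [hε₁]; nlinarith only [h1a, h1b]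
  have hε₂sq : ε₂^2 ≤ 4*δ^2 := by rw [hε₂]; nlinarith only [h2a, h2b]
  have hub : q*ε₁^2 - 2*(r*(ε₁*ε₂)) + p*ε₂^2 ≤ 16*p*δ^2 := by
    have k1 := mul_nonneg (sub_nonneg.2 hrle.1) (sq_nonneg (ε₁ - ε₂))
    have k2 := mul_nonneg (show (0:ℝ) ≤ p + r by linarith [hrle.2]) (sq_nonneg (ε₁ + ε₂))
    have k3 := mul_nonneg (sub_nonneg.2 hqp) (sq_nonneg ε₁)
    have k4 := mul_le_mul_of_nonneg_left hε₁sq hp0.le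
    have k5 := mul_le_mul_of_nonneg_left hε₂sq hp0.le
    linarith only [k1, k2, k3, k4, k5]
  have hkey : (s₀^2*p + t₀^2*q + 2*(s₀*t₀*r)) * (p*q - r^2) = q*ε₁^2 - 2*(r*(ε₁*ε₂)) + p*ε₂^2 := by
    rw [hs₀, ht₀]; simp only [div_eq_mul_inv]; linear_combination (q*ε₁^2 - 2*(r*(ε₁*ε₂)) + p*ε₂^2) * ((p*q - r^2) * (p*q - r^2)⁻¹ + 1) * mul_inv_cancel₀ hΔne
  have hquart : ‖s₀ • e + t₀ • f‖^2 ≤ 1/4 := by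
    rw [hexp2]
    have hmul : (s₀^2*p + t₀^2*q + 2*(s₀*t₀*r)) * (p*q - r^2) ≤ (1/4) * (p*q - r^2) := by
      rw [hkey]
      have h16 : 16*p*δ^2 ≤ (1/4)*(p*q - r^2) := by linarith only [hlemA]
      linarith only [hub, h16]
    exact le_of_mul_le_mul_right hmul hΔpos
  have hhalf : ‖s₀ • e + t₀ • f‖ ≤ 1/2 := by
    linarith only [sq_nonneg (‖s₀ • e + t₀ • f‖ - 1/2), hquart]
  have htri := dist_triangle y x b₁
  rw [hyx] at htri
  linarith only [h2le, htri, hx1', hhalf, hδ]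

end

/-- There are absolute constants `c₁, c₂ > 0` such that whenever
`n ≥ 3`, `a₁, a₂, a₃ ∈ ℝⁿ` are distinct, `0 < δ < 1/2`, the circumradius of the
triangle is at least `2` (expressed as: every point equidistant from `a₁, a₂, a₃`
is at distance at least `2` from them; this holds vacuously when the points are
collinear, i.e. `R = ∞`), and `c₁ δ^{1/2} ≤ m ≤ M ≤ c₂` for the shortest and
longest side lengths `m, M`, then the three `δ`-annuli of unit spheres centered at
`a₁, a₂, a₃` have empty intersection. -/
theorem stmt4 :
    ∃ c₁ c₂ : ℝ, 0 < c₁ ∧ 0 < c₂ ∧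
      ∀ (n : ℕ), 3 ≤ n →
      ∀ (a₁ a₂ a₃ : EuclideanSpace ℝ (Fin n)) (δ : ℝ),
        a₁ ≠ a₂ → a₂ ≠ a₃ → a₁ ≠ a₃ →
        0 < δ → δ < 1/2 →
        (∀ o : EuclideanSpace ℝ (Fin n),
          dist o a₁ = dist o a₂ → dist o a₂ = dist o a₃ → 2 ≤ dist o a₁) →
        c₁ * Real.sqrt δ ≤ min (dist a₁ a₂) (min (dist a₂ a₃) (dist a₃ a₁)) →
        max (dist a₁ a₂) (max (dist a₂ a₃) (dist a₃ a₁)) ≤ c₂ →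
        ({x : EuclideanSpace ℝ (Fin n) | 1 - δ ≤ dist x a₁ ∧ dist x a₁ ≤ 1 + δ} ∩
         {x : EuclideanSpace ℝ (Fin n) | 1 - δ ≤ dist x a₂ ∧ dist x a₂ ≤ 1 + δ} ∩
         {x : EuclideanSpace ℝ (Fin n) | 1 - δ ≤ dist x a₃ ∧ dist x a₃ ≤ 1 + δ}) = ∅ := by
  refine ⟨100, 1, by norm_num, by norm_num, ?_⟩
  intro n hn a₁ a₂ a₃ δ h12 h23 h13 hδ0 hδ heq hmin hmax
  rw [Set.eq_empty_iff_forall_notMem]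
  intro x hx
  obtain ⟨⟨hm1, hm2⟩, hm3⟩ := hx
  obtain ⟨hx1, hx1'⟩ := hm1
  obtain ⟨hx2, hx2'⟩ := hm2
  obtain ⟨hx3, hx3'⟩ := hm3
  have m12 : 100 * Real.sqrt δ ≤ dist a₁ a₂ := hmin.trans (min_le_left _ _)
  have m23 : 100 * Real.sqrt δ ≤ dist a₂ a₃ :=
    hmin.trans ((min_le_right _ _).trans (min_le_left _ _))
  have m31 : 100 * Real.sqrt δ ≤ dist a₃ a₁ :=
    hmin.trans ((min_le_right _ _).trans (min_le_right _ _))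
  have M12 : dist a₁ a₂ ≤ 1 := (le_max_left _ _).trans hmax
  have M23 : dist a₂ a₃ ≤ 1 := ((le_max_left _ _).trans (le_max_right _ _)).trans hmax
  have M31 : dist a₃ a₁ ≤ 1 := ((le_max_right _ _).trans (le_max_right _ _)).trans hmax
  -- three cases, according to which side is longest
  rcases le_total (dist a₁ a₂) (dist a₃ a₁) with hA | hA
  · rcases le_total (dist a₂ a₃) (dist a₃ a₁) with hB | hB
    · -- d31 is the max; use (a₁, a₂, a₃)
      refine core a₁ a₂ a₃ x δ hδ0 hδ heq ?_ ?_ m12 m23 ?_ hx1 hx1' hx2 hx2' hx3 hx3'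
      · rwa [dist_comm a₃ a₁] at hA
      · rwa [dist_comm a₃ a₁] at hB
      · rwa [dist_comm a₃ a₁] at M31
    · -- d23 is the max; use (a₂, a₁, a₃)
      refine core a₂ a₁ a₃ x δ hδ0 hδ ?_ ?_ ?_ ?_ ?_ M23 hx2 hx2' hx1 hx1' hx3 hx3'
      · intro o ho1 ho2
        have e1 : dist o a₁ = dist o a₂ := ho1.symm
        have e2 : dist o a₂ = dist o a₃ := ho1.trans ho2
        have := heq o e1 e2
        linarith [this, e1.le, e1.ge]
      · rw [dist_comm a₂ a₁]; exact hA.trans hB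
      · rw [dist_comm a₁ a₃]; exact hB
      · rw [dist_comm a₂ a₁]; exact m12
      · rw [dist_comm a₁ a₃]; exact m31
  · rcases le_total (dist a₂ a₃) (dist a₁ a₂) with hB | hB
    · -- d12 is the max; use (a₁, a₃, a₂)
      refine core a₁ a₃ a₂ x δ hδ0 hδ ?_ ?_ ?_ ?_ ?_ M12 hx1 hx1' hx3 hx3' hx2 hx2'
      · intro o ho1 ho2
        exact heq o (ho1.trans ho2) ho2.symm
      · rw [dist_comm a₁ a₃]; exact hA
      · rw [dist_comm a₃ a₂]; exact hB
      · rw [dist_comm a₁ a₃]; exact m31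
      · rw [dist_comm a₃ a₂]; exact m23
    · -- d23 is the max; use (a₂, a₁, a₃)
      refine core a₂ a₁ a₃ x δ hδ0 hδ ?_ ?_ ?_ ?_ ?_ M23 hx2 hx2' hx1 hx1' hx3 hx3'
      · intro o ho1 ho2
        have e1 : dist o a₁ = dist o a₂ := ho1.symm
        have e2 : dist o a₂ = dist o a₃ := ho1.trans ho2
        have := heq o e1 e2
        linarith [this, e1.le, e1.ge]
      · rw [dist_comm a₂ a₁]; exact hB
      · rw [dist_comm a₁ a₃]; exact hA.trans hB
      · rw [dist_comm a₂ a₁]; exact m12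
      · rw [dist_comm a₁ a₃]; exact m31
  
end
end

section
/- Let n ≥ 2, δ ∈ (0,1/2), A > 0, and let {S_i}_{i∈I} be a finite collection of spheres in ℝⁿ with radii in [1/2,2], identified with points in ℝ^{n+1}, satisfying #{i : S_i ∈ B_ρ} ≤ A ρ for every ball B_ρ ⊂ ℝ^{n+1} of radius ρ ≥ δ. Assume n ≥ 3. Then for all nonnegative coefficients a_i, ‖Σ_i a_i 1_{S_i^δ}‖_{L²(ℝⁿ)} ≤ C δ log(1/δ) A^{1/2} (Σ_i a_i²)^{1/2}. -/
open MeasureTheory Metric Set Finset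
open scoped ENNReal NNReal Classical

noncomputable section

open scoped RealInnerProductSpace


def bvol (k : ℕ) : ℝ := (volume (ball (0 : EuclideanSpace ℝ (Fin k)) 1)).toReal
lemma bvol_nonneg (k : ℕ) : 0 ≤ bvol k := ENNReal.toReal_nonneg
lemma ball_eq_ofReal (k : ℕ) :
    volume (ball (0 : EuclideanSpace ℝ (Fin k)) 1) = ENNReal.ofReal (bvol k) :=
  (ENNReal.ofReal_toReal measure_ball_lt_top.ne).symm


lemma annulus_vol (k : ℕ) (p : EuclideanSpace ℝ (Fin (k+1))) {a b : ℝ} (ha : 0 ≤ a) (hab : a ≤ b) :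
    volume {y : EuclideanSpace ℝ (Fin (k+1)) | a ≤ dist y p ∧ dist y p ≤ b} ≤
      ENNReal.ofReal (b ^ (k+1) - a ^ (k+1)) * volume (ball (0 : EuclideanSpace ℝ (Fin (k+1))) 1) := by
  haveI : Nontrivial (EuclideanSpace ℝ (Fin (k+1))) :=
    ⟨0, EuclideanSpace.single 0 1, by
      intro h
      have := congrArg norm h
      simp [EuclideanSpace.norm_single] at this⟩
  have hsub : {y : EuclideanSpace ℝ (Fin (k+1)) | a ≤ dist y p ∧ dist y p ≤ b}
      ⊆ closedBall p b \ ball p a := by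
    intro y hy
    exact ⟨mem_closedBall.2 hy.2, fun h => absurd hy.1 (by simpa [mem_ball] using h)⟩
  refine le_trans (measure_mono hsub) ?_
  have hdiff : volume (closedBall p b \ ball p a)
      = volume (closedBall p b) - volume (ball p a) :=
    measure_diff (ball_subset_closedBall.trans (closedBall_subset_closedBall hab))
      measurableSet_ball.nullMeasurableSet (measure_ball_lt_top).ne
  rw [hdiff, Measure.addHaar_closedBall _ _ (ha.trans hab), Measure.addHaar_ball _ _ ha,
    finrank_euclideanSpace_fin]
  rw [← ENNReal.sub_mul (fun _ _ => (measure_ball_lt_top).ne),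
    ENNReal.ofReal_sub _ (by positivity)]

lemma pow_sub_pow_bound (k : ℕ) {R ρ : ℝ} (h0 : 0 ≤ ρ) (h : ρ ≤ R) :
    R ^ (k+2) - ρ ^ (k+2) ≤ (k+2) * R ^ k * (R ^ 2 - ρ ^ 2) := by
  have hR : 0 ≤ R := h0.trans h
  have hgeom : (∑ i ∈ Finset.range (k+2), R ^ i * ρ ^ (k + 1 - i)) * (R - ρ)
      = R ^ (k+2) - ρ ^ (k+2) := geom_sum₂_mul R ρ (k+2)
  have hS : (∑ i ∈ Finset.range (k+2), R ^ i * ρ ^ (k + 1 - i)) ≤ (k+2) * R ^ (k+1) := by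
    calc (∑ i ∈ Finset.range (k+2), R ^ i * ρ ^ (k + 1 - i))
        ≤ ∑ _i ∈ Finset.range (k+2), R ^ (k+1) := by
          refine Finset.sum_le_sum fun i hi => ?_
          have hi' : i ≤ k+1 := by
            have := Finset.mem_range.1 hi; omega
          calc R ^ i * ρ ^ (k + 1 - i) ≤ R ^ i * R ^ (k + 1 - i) := by
                have := pow_le_pow_left₀ h0 h (k+1-i)
                exact mul_le_mul_of_nonneg_left this (pow_nonneg hR i)
            _ = R ^ (k+1) := by rw [← pow_add]; congr 1; omega
      _ = (k+2) * R ^ (k+1) := by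
          rw [Finset.sum_const, Finset.card_range]; push_cast [nsmul_eq_mul]; ring
  calc R ^ (k+2) - ρ ^ (k+2) = (∑ i ∈ Finset.range (k+2), R ^ i * ρ ^ (k + 1 - i)) * (R - ρ) := hgeom.symm
    _ ≤ ((k+2) * R ^ (k+1)) * (R - ρ) := mul_le_mul_of_nonneg_right hS (by linarith)
    _ = (k+2) * R ^ k * ((R - ρ) * R) := by ring
    _ ≤ (k+2) * R ^ k * ((R - ρ) * (R + ρ)) := by
        refine mul_le_mul_of_nonneg_left ?_ (by positivity)
        exact mul_le_mul_of_nonneg_left (by linarith) (by linarith)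
    _ = (k+2) * R ^ k * (R ^ 2 - ρ ^ 2) := by ring

lemma shell_vol (k : ℕ) {a b M : ℝ} (hb0 : 0 ≤ b) (hb3 : Real.sqrt b ≤ 3) (hM : b - max a 0 ≤ M) :
    volume {y : EuclideanSpace ℝ (Fin (k+2)) | a ≤ ‖y‖^2 ∧ ‖y‖^2 ≤ b} ≤
      ENNReal.ofReal ((k+2) * 3 ^ k * M) * volume (ball (0 : EuclideanSpace ℝ (Fin (k+2))) 1) := by
  by_cases hab : max a 0 ≤ b
  · set ρ := Real.sqrt (max a 0) with hρdef
    set R := Real.sqrt b with hRdef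
    have hρ0 : 0 ≤ ρ := Real.sqrt_nonneg _
    have hρR : ρ ≤ R := Real.sqrt_le_sqrt hab
    have hsub : {y : EuclideanSpace ℝ (Fin (k+2)) | a ≤ ‖y‖^2 ∧ ‖y‖^2 ≤ b}
        ⊆ {y : EuclideanSpace ℝ (Fin (k+2)) | ρ ≤ dist y 0 ∧ dist y 0 ≤ R} := by
      intro y hy
      have hy1 : max a 0 ≤ ‖y‖^2 := max_le hy.1 (sq_nonneg _)
      constructor
      · rw [dist_zero_right]
        calc ρ ≤ Real.sqrt (‖y‖^2) := Real.sqrt_le_sqrt hy1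
          _ = ‖y‖ := Real.sqrt_sq (norm_nonneg y)
      · rw [dist_zero_right]
        calc ‖y‖ = Real.sqrt (‖y‖^2) := (Real.sqrt_sq (norm_nonneg y)).symm
          _ ≤ R := Real.sqrt_le_sqrt hy.2
    refine le_trans (measure_mono hsub) ?_
    refine le_trans (annulus_vol (k+1) 0 hρ0 hρR) ?_
    refine mul_le_mul_left (ENNReal.ofReal_le_ofReal ?_) _
    have h1 : R ^ (k+2) - ρ ^ (k+2) ≤ (k+2) * R ^ k * (R ^ 2 - ρ ^ 2) :=
      pow_sub_pow_bound k hρ0 hρR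
    have hR2 : R ^ 2 = b := Real.sq_sqrt hb0
    have hρ2 : ρ ^ 2 = max a 0 := Real.sq_sqrt (le_max_right _ _)
    have hRk : R ^ k ≤ 3 ^ k := pow_le_pow_left₀ (Real.sqrt_nonneg _) hb3 k
    calc R ^ (k+1+1) - ρ ^ (k+1+1) ≤ (k+2) * R ^ k * (R ^ 2 - ρ ^ 2) := h1
      _ = (k+2) * R ^ k * (b - max a 0) := by rw [hR2, hρ2]
      _ ≤ (k+2) * 3 ^ k * M := by
          have hnn : (0:ℝ) ≤ b - max a 0 := by linarith
          refine mul_le_mul (mul_le_mul_of_nonneg_left hRk (by positivity)) hM hnn (by positivity)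
  · have : {y : EuclideanSpace ℝ (Fin (k+2)) | a ≤ ‖y‖^2 ∧ ‖y‖^2 ≤ b} = ∅ := by
      ext y; simp only [Set.mem_setOf_eq, Set.mem_empty_iff_false, iff_false]
      rintro ⟨h1, h2⟩
      exact hab (max_le (h1.trans h2) (le_trans (sq_nonneg _) h2))
    simp [this]

/-- shell volume in the pi space, allowing `b < 0`. -/
lemma shell_vol_pi (k : ℕ) {a b M : ℝ} (hM0 : 0 ≤ M) (hb9 : b ≤ 9) (hM : b - max a 0 ≤ M) :
    volume {v : Fin (k+2) → ℝ | a ≤ ∑ j, v j ^ 2 ∧ ∑ j, v j ^ 2 ≤ b} ≤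
      ENNReal.ofReal ((k+2) * 3 ^ k * M * bvol (k+2)) := by
  by_cases hb0 : 0 ≤ b
  · have hmp := EuclideanSpace.volume_preserving_symm_measurableEquiv_toLp (Fin (k+2))
    have hmeas : MeasurableSet {v : Fin (k+2) → ℝ | a ≤ ∑ j, v j ^ 2 ∧ ∑ j, v j ^ 2 ≤ b} := by
      have hc : Continuous fun v : Fin (k+2) → ℝ => ∑ j, v j ^ 2 := by
        continuity
      exact (measurableSet_le measurable_const hc.measurable).inter
        (measurableSet_le hc.measurable measurable_const)
    have hpre : (MeasurableEquiv.toLp 2 (Fin (k+2) → ℝ)).symm ⁻¹'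
        {v : Fin (k+2) → ℝ | a ≤ ∑ j, v j ^ 2 ∧ ∑ j, v j ^ 2 ≤ b}
        = {y : EuclideanSpace ℝ (Fin (k+2)) | a ≤ ‖y‖^2 ∧ ‖y‖^2 ≤ b} := by
      ext y
      have hnorm : ‖y‖^2 = ∑ j, y j ^ 2 := by
        rw [EuclideanSpace.norm_eq, Real.sq_sqrt (by positivity)]
        simp [sq_abs]
      simp only [Set.mem_preimage, Set.mem_setOf_eq, hnorm]
      rfl
    rw [← hmp.measure_preimage hmeas.nullMeasurableSet, hpre]
    have hb3 : Real.sqrt b ≤ 3 := by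
      rw [show (3:ℝ) = Real.sqrt 9 by rw [show (9:ℝ) = 3^2 by norm_num, Real.sqrt_sq]; norm_num]
      exact Real.sqrt_le_sqrt hb9
    refine (shell_vol k hb0 hb3 hM).trans ?_
    rw [ball_eq_ofReal, ← ENNReal.ofReal_mul (mul_nonneg (by positivity) hM0)]
  · have : {v : Fin (k+2) → ℝ | a ≤ ∑ j, v j ^ 2 ∧ ∑ j, v j ^ 2 ≤ b} = ∅ := by
      ext v; simp only [Set.mem_setOf_eq, Set.mem_empty_iff_false, iff_false]
      rintro ⟨_, h2⟩
      exact hb0 (le_trans (by positivity) h2)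
    simp [this]

def cA (m : ℕ) : ℝ := 8*(m+3)*3^(m+2)*bvol (m+3)
def cS (m : ℕ) : ℝ := 8*(m+2)*3^m*bvol (m+2)
def cG (m : ℕ) : ℝ := 15 * cA m + 48 * cS m
lemma cA_nonneg (m : ℕ) : 0 ≤ cA m := by
  have := bvol_nonneg (m+3); unfold cA; positivity
lemma cS_nonneg (m : ℕ) : 0 ≤ cS m := by
  have := bvol_nonneg (m+2); unfold cS; positivity
lemma cG_nonneg (m : ℕ) : 0 ≤ cG m := by
  have := cA_nonneg m; have := cS_nonneg m; unfold cG; linarith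

lemma slab_bound {δ r s d u A W : ℝ} (hd : 0 < d)
    (hdw : W = A - 2*(d*u) + d^2) (hl2 : (s-δ)^2 ≤ W) (hu2 : W ≤ (s+δ)^2)
    (hn1 : (r-δ)^2 ≤ A) (hn2 : A ≤ (r+δ)^2) :
    ((r-δ)^2 + d^2 - (s+δ)^2)/(2*d) ≤ u ∧ u ≤ ((r+δ)^2 + d^2 - (s-δ)^2)/(2*d) := by
  constructor
  · rw [div_le_iff₀ (by linarith : (0:ℝ) < 2*d)]
    nlinarith
  · rw [le_div_iff₀ (by linarith : (0:ℝ) < 2*d)]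
    nlinarith

lemma far_final {cA cS δ d : ℝ} (hcA : 0 ≤ cA) (hcS : 0 ≤ cS) (hδ : 0 < δ) (hd4 : 4*δ < d) :
    8 * cS * δ^2 * (d + δ) ≤ (5*cA + 16*cS) * δ^2 * d := by
  have hc8 : (0:ℝ) ≤ 8*cS*δ^2 := by nlinarith [sq_nonneg δ]
  have h1 : 8*cS*δ^2*δ ≤ 8*cS*δ^2*d :=
    mul_le_mul_of_nonneg_left (by linarith) hc8
  have h2 : 0 ≤ 5*cA*δ^2*d :=
    mul_nonneg (mul_nonneg (by linarith) (sq_nonneg δ)) (by linarith)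
  nlinarith

set_option maxHeartbeats 2000000 in
lemma keyG (m : ℕ) {δ r s : ℝ} (hδ0 : 0 < δ) (hδ : δ < 1/2)
    (hr1 : 1/2 ≤ r) (hr2 : r ≤ 2) (hs1 : 1/2 ≤ s) (hs2 : s ≤ 2)
    (p q : EuclideanSpace ℝ (Fin (m+3))) :
    volume {y : EuclideanSpace ℝ (Fin (m+3)) |
        r - δ ≤ dist y p ∧ dist y p ≤ r + δ ∧ s - δ ≤ dist y q ∧ dist y q ≤ s + δ} ≤
      ENNReal.ofReal (cG m * δ^2 / (max (dist p q) |r - s| + δ)) := by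
  set S : Set (EuclideanSpace ℝ (Fin (m+3))) := {y : EuclideanSpace ℝ (Fin (m+3)) |
      r - δ ≤ dist y p ∧ dist y p ≤ r + δ ∧ s - δ ≤ dist y q ∧ dist y q ≤ s + δ} with hS
  set d := dist p q with hd
  have hd0 : 0 ≤ d := dist_nonneg
  by_cases hτ : |r - s| ≤ d + 2*δ
  swap
  · -- the set is empty
    have hempty : S = ∅ := by
      ext y
      simp only [hS, Set.mem_setOf_eq, Set.mem_empty_iff_false, iff_false]
      rintro ⟨h1, h2, h3, h4⟩
      have habs : |dist y p - dist y q| ≤ d := by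
        rw [dist_comm y p, dist_comm y q]
        exact abs_dist_sub_le p q y
      obtain ⟨hm1, hm2⟩ := abs_le.1 habs
      exact hτ (abs_le.2 ⟨by linarith, by linarith⟩)
    rw [hempty]
    simp
  · have hden1 : 0 < d + δ := by linarith
    suffices h : volume S ≤ ENNReal.ofReal ((5*cA m + 16*cS m) * δ^2 / (d+δ)) by
      refine h.trans (ENNReal.ofReal_le_ofReal ?_)
      have hmax0 : 0 ≤ max d |r-s| := le_trans hd0 (le_max_left _ _)
      have hden2 : 0 < max d |r-s| + δ := by linarith
      rw [div_le_div_iff₀ hden1 hden2]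
      have hmax : max d |r-s| + δ ≤ 3*(d+δ) := by
        have h1 : max d |r-s| ≤ d + 2*δ := max_le (by linarith) hτ
        linarith
      have hX : (0:ℝ) ≤ (5*cA m + 16*cS m) * δ^2 := by
        have := cA_nonneg m; have := cS_nonneg m; positivity
      calc (5*cA m + 16*cS m) * δ^2 * (max d |r-s| + δ)
          ≤ (5*cA m + 16*cS m) * δ^2 * (3*(d+δ)) := mul_le_mul_of_nonneg_left hmax hX
        _ = cG m * δ^2 * (d+δ) := by unfold cG; ring
    by_cases hd4 : d ≤ 4*δ
    · -- near case : crude annulus bound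
      have hsub : S ⊆ {y : EuclideanSpace ℝ (Fin (m+3)) | r - δ ≤ dist y p ∧ dist y p ≤ r + δ} :=
        fun y hy => ⟨hy.1, hy.2.1⟩
      refine (measure_mono hsub).trans ?_
      refine (annulus_vol (m+2) p (a := r-δ) (b := r+δ) (by linarith) (by linarith)).trans ?_
      rw [ball_eq_ofReal, ← ENNReal.ofReal_mul
        (sub_nonneg.2 (pow_le_pow_left₀ (by linarith) (by linarith) (m+3)))]
      refine ENNReal.ofReal_le_ofReal ?_
      have hpow : (r+δ)^(m+3) - (r-δ)^(m+3) ≤ ((m:ℝ)+3) * (r+δ)^(m+1) * ((r+δ)^2 - (r-δ)^2) := by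
        have := pow_sub_pow_bound (m+1) (show (0:ℝ) ≤ r - δ by linarith) (show r - δ ≤ r + δ by linarith)
        calc (r+δ)^(m+3) - (r-δ)^(m+3) = (r+δ)^(m+1+2) - (r-δ)^(m+1+2) := by ring_nf
          _ ≤ ((m+1:ℕ)+2) * (r+δ)^(m+1) * ((r+δ)^2 - (r-δ)^2) := this
          _ = ((m:ℝ)+3) * (r+δ)^(m+1) * ((r+δ)^2 - (r-δ)^2) := by push_cast; ring
      have h2 : (r+δ)^(m+1) ≤ (3:ℝ)^(m+2) :=
        (pow_le_pow_left₀ (by linarith) (by linarith) (m+1)).trans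
          (pow_le_pow_right₀ (by norm_num) (by omega))
      have hb := bvol_nonneg (m+3)
      have hA : ((r+δ)^(m+3) - (r-δ)^(m+3)) * bvol (m+3) ≤ cA m * δ := by
        unfold cA
        have h3 : ((r+δ)^(m+3) - (r-δ)^(m+3)) ≤ ((m:ℝ)+3) * (3:ℝ)^(m+2) * (8*δ) := by
          refine hpow.trans ?_
          have h4 : (r+δ)^2 - (r-δ)^2 = 4*r*δ := by ring
          rw [h4]
          have h5 : 4*r*δ ≤ 8*δ := by nlinarith
          have h6 : ((m:ℝ)+3) * (r+δ)^(m+1) ≤ ((m:ℝ)+3) * (3:ℝ)^(m+2) :=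
            mul_le_mul_of_nonneg_left h2 (by positivity)
          have h7 : (0:ℝ) ≤ 4*r*δ := by positivity
          have h8 : (0:ℝ) ≤ ((m:ℝ)+3) * (r+δ)^(m+1) := by positivity
          exact mul_le_mul h6 h5 h7 (by positivity)
        calc ((r+δ)^(m+3) - (r-δ)^(m+3)) * bvol (m+3)
            ≤ (((m:ℝ)+3) * (3:ℝ)^(m+2) * (8*δ)) * bvol (m+3) := by
              exact mul_le_mul_of_nonneg_right h3 hb
          _ = (8*((m:ℝ)+3)*3^(m+2)*bvol (m+3)) * δ := by push_cast; ring
      refine hA.trans ?_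
      rw [le_div_iff₀ hden1]
      have hcA := cA_nonneg m; have hcS := cS_nonneg m
      have h9 : d + δ ≤ 5*δ := by linarith
      calc cA m * δ * (d+δ) ≤ cA m * δ * (5*δ) :=
            mul_le_mul_of_nonneg_left h9 (by positivity)
        _ = 5*cA m * δ^2 := by ring
        _ ≤ (5*cA m + 16*cS m) * δ^2 := by
            have := mul_nonneg hcS (sq_nonneg δ); nlinarith
    · -- far case
      push_neg at hd4
      have hdpos : 0 < d := by linarith
      set v : EuclideanSpace ℝ (Fin (m+3)) := q - p with hv
      have hvn : ‖v‖ = d := by rw [hv, hd, dist_eq_norm, norm_sub_rev]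
      set e0 : EuclideanSpace ℝ (Fin (m+3)) := EuclideanSpace.single (0 : Fin (m+3)) (1:ℝ) with he0
      set w : EuclideanSpace ℝ (Fin (m+3)) := d • e0 with hwdef
      have hwn : ‖w‖ = d := by
        rw [hwdef, norm_smul, he0, EuclideanSpace.norm_single]
        simp [abs_of_nonneg hd0]
      set R := Submodule.reflection (ℝ ∙ (v - w))ᗮ with hR
      have hRv : R v = w := Submodule.reflection_sub (hvn.trans hwn.symm)
      set g : EuclideanSpace ℝ (Fin (m+3)) → EuclideanSpace ℝ (Fin (m+3)) :=
        fun y => R (y - p) with hg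
      have hgm : MeasurePreserving g volume volume :=
        (R.measurePreserving).comp (measurePreserving_sub_right volume p)
      set S₀ : Set (EuclideanSpace ℝ (Fin (m+3))) := {y : EuclideanSpace ℝ (Fin (m+3)) |
          r - δ ≤ ‖y‖ ∧ ‖y‖ ≤ r + δ ∧ s - δ ≤ dist y w ∧ dist y w ≤ s + δ} with hS0
      have hS0meas : MeasurableSet S₀ := by
        have h1 : Measurable fun y : EuclideanSpace ℝ (Fin (m+3)) => ‖y‖ := measurable_norm
        have h2 : Measurable fun y : EuclideanSpace ℝ (Fin (m+3)) => dist y w :=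
          (Continuous.dist continuous_id continuous_const).measurable
        have hseteq : S₀ = {y : EuclideanSpace ℝ (Fin (m+3)) | r - δ ≤ ‖y‖} ∩
            ({y : EuclideanSpace ℝ (Fin (m+3)) | ‖y‖ ≤ r + δ} ∩
             ({y : EuclideanSpace ℝ (Fin (m+3)) | s - δ ≤ dist y w} ∩
              {y : EuclideanSpace ℝ (Fin (m+3)) | dist y w ≤ s + δ})) := by
          ext y; simp only [hS0, Set.mem_inter_iff, Set.mem_setOf_eq]
        rw [hseteq]
        exact (measurableSet_le measurable_const h1).inter
          ((measurableSet_le h1 measurable_const).inter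
            ((measurableSet_le measurable_const h2).inter
              (measurableSet_le h2 measurable_const)))
      have hpre : S = g ⁻¹' S₀ := by
        ext y
        have e1 : ‖g y‖ = dist y p := by
          rw [hg]; simp only []
          rw [R.norm_map, ← dist_eq_norm]
        have e2 : dist (g y) w = dist y q := by
          rw [hg]; simp only []
          rw [dist_eq_norm, ← hRv, ← R.map_sub, R.norm_map,
            show y - p - v = y - q by rw [hv]; abel, ← dist_eq_norm]
        simp only [hS, hS0, Set.mem_setOf_eq, Set.mem_preimage, e1, e2]
      have hvolS : volume S = volume S₀ := by
        rw [hpre]; exact hgm.measure_preimage hS0meas.nullMeasurableSet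
      -- slab bounds
      set lo := ((r-δ)^2 + d^2 - (s+δ)^2)/(2*d) with hlo
      set hi := ((r+δ)^2 + d^2 - (s-δ)^2)/(2*d) with hhi
      set T : Set (EuclideanSpace ℝ (Fin (m+3))) := {y : EuclideanSpace ℝ (Fin (m+3)) |
          lo ≤ y 0 ∧ y 0 ≤ hi ∧ (r-δ)^2 ≤ ‖y‖^2 ∧ ‖y‖^2 ≤ (r+δ)^2} with hT
      have hsub0 : S₀ ⊆ T := by
        rintro y ⟨h1, h2, h3, h4⟩
        have hn1 : (r-δ)^2 ≤ ‖y‖^2 := pow_le_pow_left₀ (by linarith) h1 2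
        have hn2 : ‖y‖^2 ≤ (r+δ)^2 := pow_le_pow_left₀ (norm_nonneg y) h2 2
        have hips : ⟪y, w⟫ = d * y 0 := by
          rw [hwdef, real_inner_smul_right, he0]
          have := EuclideanSpace.inner_single_right (𝕜 := ℝ) 0 1 y
          rw [this]; simp
        have hdw : dist y w ^2 = ‖y‖^2 - 2*(d * y 0) + d^2 := by
          rw [dist_eq_norm, norm_sub_sq_real, hips, hwn]
        have hl2 : (s-δ)^2 ≤ dist y w ^2 := pow_le_pow_left₀ (by linarith) h3 2
        have hu2 : dist y w ^2 ≤ (s+δ)^2 := pow_le_pow_left₀ dist_nonneg h4 2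
        have hsb := slab_bound (u := y 0) hdpos hdw hl2 hu2 hn1 hn2
        exact ⟨hsb.1, hsb.2, hn1, hn2⟩
      -- compute volume T via Fubini
      set T' : Set (Fin (m+3) → ℝ) := {y : Fin (m+3) → ℝ |
          lo ≤ y 0 ∧ y 0 ≤ hi ∧ (r-δ)^2 ≤ ∑ i, y i^2 ∧ ∑ i, y i^2 ≤ (r+δ)^2} with hT'
      have hsum_meas : Measurable fun y : Fin (m+3) → ℝ => ∑ i, y i^2 := by
        exact Finset.measurable_sum _ fun i _ => ((measurable_pi_apply i).pow_const 2)
      have hT'meas : MeasurableSet T' := by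
        have h0 : Measurable fun y : Fin (m+3) → ℝ => y 0 := measurable_pi_apply 0
        have hseteq : T' = {y : Fin (m+3) → ℝ | lo ≤ y 0} ∩
            ({y : Fin (m+3) → ℝ | y 0 ≤ hi} ∩
             ({y : Fin (m+3) → ℝ | (r-δ)^2 ≤ ∑ i, y i^2} ∩
              {y : Fin (m+3) → ℝ | ∑ i, y i^2 ≤ (r+δ)^2})) := by
          ext y; simp only [hT', Set.mem_inter_iff, Set.mem_setOf_eq]
        rw [hseteq]
        exact (measurableSet_le measurable_const h0).inter
          ((measurableSet_le h0 measurable_const).inter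
            ((measurableSet_le measurable_const hsum_meas).inter
              (measurableSet_le hsum_meas measurable_const)))
      have hTpre : (MeasurableEquiv.toLp 2 (Fin (m+3) → ℝ)).symm ⁻¹' T' = T := by
        ext y
        have hnorm : ‖y‖^2 = ∑ i, y i ^ 2 := by
          rw [EuclideanSpace.norm_eq, Real.sq_sqrt (by positivity)]
          simp [sq_abs]
        simp only [hT, hT', Set.mem_preimage, Set.mem_setOf_eq, hnorm]
        rfl
      have hvolT : volume T = volume T' := by
        rw [← hTpre]
        exact (EuclideanSpace.volume_preserving_symm_measurableEquiv_toLp _).measure_preimage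
          hT'meas.nullMeasurableSet
      set T₂ : Set (ℝ × (Fin (m+2) → ℝ)) := {uv : ℝ × (Fin (m+2) → ℝ) |
          lo ≤ uv.1 ∧ uv.1 ≤ hi ∧ (r-δ)^2 ≤ uv.1^2 + ∑ j, uv.2 j^2 ∧
            uv.1^2 + ∑ j, uv.2 j^2 ≤ (r+δ)^2} with hT2
      have hsum2_meas : Measurable fun uv : ℝ × (Fin (m+2) → ℝ) => uv.1^2 + ∑ j, uv.2 j^2 := by
        refine Measurable.add (measurable_fst.pow_const 2) ?_
        exact (Finset.measurable_sum _ fun j _ =>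
          ((measurable_pi_apply j).comp measurable_snd).pow_const 2)
      have hT2meas : MeasurableSet T₂ := by
        have h0 : Measurable fun uv : ℝ × (Fin (m+2) → ℝ) => uv.1 := measurable_fst
        have hseteq : T₂ = {uv : ℝ × (Fin (m+2) → ℝ) | lo ≤ uv.1} ∩
            ({uv : ℝ × (Fin (m+2) → ℝ) | uv.1 ≤ hi} ∩
             ({uv : ℝ × (Fin (m+2) → ℝ) | (r-δ)^2 ≤ uv.1^2 + ∑ j, uv.2 j^2} ∩
              {uv : ℝ × (Fin (m+2) → ℝ) | uv.1^2 + ∑ j, uv.2 j^2 ≤ (r+δ)^2})) := by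
          ext uv; simp only [hT2, Set.mem_inter_iff, Set.mem_setOf_eq]
        rw [hseteq]
        exact (measurableSet_le measurable_const h0).inter
          ((measurableSet_le h0 measurable_const).inter
            ((measurableSet_le measurable_const hsum2_meas).inter
              (measurableSet_le hsum2_meas measurable_const)))
      have hT2pre : (MeasurableEquiv.piFinSuccAbove (fun _ : Fin (m+3) => ℝ) 0) ⁻¹' T₂ = T' := by
        ext y
        have hsum : ∑ i, y i ^ 2 = y 0 ^ 2 + ∑ j : Fin (m+2), y (Fin.succ j) ^ 2 :=
          Fin.sum_univ_succ _
        simp only [hT2, hT', Set.mem_preimage, Set.mem_setOf_eq,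
          MeasurableEquiv.piFinSuccAbove_apply, Fin.insertNthEquiv_symm_apply,
          Fin.removeNth, Fin.succAbove_zero, hsum]
      have hvolT' : volume T' = ∫⁻ u, volume {v : Fin (m+2) → ℝ | (u, v) ∈ T₂} := by
        rw [← hT2pre,
          (volume_preserving_piFinSuccAbove (fun _ : Fin (m+3) => ℝ) 0).measure_preimage
            hT2meas.nullMeasurableSet,
          Measure.volume_eq_prod, Measure.prod_apply hT2meas]
        rfl
      have hslice : ∀ u : ℝ, volume {v : Fin (m+2) → ℝ | (u, v) ∈ T₂} ≤
          (Set.Icc lo hi).indicator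
            (fun _ => ENNReal.ofReal (((m:ℝ)+2) * 3^m * (8*δ) * bvol (m+2))) u := by
        intro u
        by_cases hu : u ∈ Set.Icc lo hi
        · rw [Set.indicator_of_mem hu]
          have hsub2 : {v : Fin (m+2) → ℝ | (u, v) ∈ T₂} ⊆
              {v : Fin (m+2) → ℝ | (r-δ)^2 - u^2 ≤ ∑ j, v j^2 ∧ ∑ j, v j^2 ≤ (r+δ)^2 - u^2} := by
            rintro vv ⟨_, _, h3, h4⟩
            exact ⟨by linarith, by linarith⟩
          refine (measure_mono hsub2).trans ?_
          have hh := shell_vol_pi m (a := (r-δ)^2 - u^2) (b := (r+δ)^2 - u^2) (M := 8*δ)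
            (by positivity) (by nlinarith [sq_nonneg u]) ?_
          · refine hh.trans (ENNReal.ofReal_le_ofReal (le_of_eq ?_))
            push_cast; ring
          · rcases le_or_gt 0 ((r-δ)^2 - u^2) with hcase | hcase
            · rw [max_eq_left hcase]; nlinarith
            · rw [max_eq_right hcase.le]; nlinarith [sq_nonneg u]
        · rw [Set.indicator_of_notMem hu]
          have : {v : Fin (m+2) → ℝ | (u, v) ∈ T₂} = ∅ := by
            ext vv
            simp only [hT2, Set.mem_setOf_eq, Set.mem_empty_iff_false, iff_false]
            rintro ⟨h1, h2, _⟩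
            exact hu ⟨h1, h2⟩
          simp [this]
      have hIcc : volume (Set.Icc lo hi) = ENNReal.ofReal (hi - lo) := Real.volume_Icc
      have hfinal : volume T' ≤
          ENNReal.ofReal (((m:ℝ)+2) * 3^m * (8*δ) * bvol (m+2)) * ENNReal.ofReal (hi - lo) := by
        rw [hvolT']
        refine (lintegral_mono hslice).trans ?_
        rw [lintegral_indicator_const measurableSet_Icc, hIcc]
      -- and hi - lo ≤ 8δ/d
      have hhl : hi - lo ≤ 8*δ/d := by
        rw [hhi, hlo, div_sub_div_same]
        have hnum : (r+δ)^2 + d^2 - (s-δ)^2 - ((r-δ)^2 + d^2 - (s+δ)^2) = 4*r*δ + 4*s*δ := by ring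
        rw [hnum]
        rw [div_le_div_iff₀ (by linarith) hdpos]
        nlinarith [mul_nonneg hδ0.le hdpos.le]
      -- put everything together
      rw [hvolS]
      refine (measure_mono hsub0).trans ?_
      rw [hvolT]
      refine hfinal.trans ?_
      have hb2 := bvol_nonneg (m+2)
      rw [← ENNReal.ofReal_mul (mul_nonneg (by positivity) hb2)]
      refine ENNReal.ofReal_le_ofReal ?_
      have hstep : ((m:ℝ)+2) * 3^m * (8*δ) * bvol (m+2) * (hi - lo) ≤
          ((m:ℝ)+2) * 3^m * (8*δ) * bvol (m+2) * (8*δ/d) := by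
        refine mul_le_mul_of_nonneg_left hhl (by positivity)
      refine hstep.trans ?_
      -- (m+2) 3^m 8δ bvol * (8δ/d) = 8 cS δ²/d ≤ 16 cS δ²/(d+δ) ≤ (5cA+16cS) δ²/(d+δ)
      have heq : ((m:ℝ)+2) * 3^m * (8*δ) * bvol (m+2) * (8*δ/d) = 8 * cS m * δ^2 / d := by
        unfold cS; field_simp
      rw [heq]
      have hcA := cA_nonneg m; have hcS := cS_nonneg m
      rw [div_le_div_iff₀ hdpos hden1]
      exact far_final hcA hcS hδ0 hd4


def Kd (δ : ℝ) : ℕ := ⌈Real.logb 2 (11/δ)⌉₊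

lemma Kd_pow {δ : ℝ} (hδ0 : 0 < δ) : 11 ≤ 2^(Kd δ) * δ := by
  have h11 : (0:ℝ) < 11/δ := by positivity
  have h1 : (11/δ : ℝ) ≤ 2 ^ (Kd δ) := by
    have h2 : (11/δ : ℝ) = (2:ℝ) ^ (Real.logb 2 (11/δ)) := (Real.rpow_logb (by norm_num) (by norm_num) h11).symm
    rw [h2, ← Real.rpow_natCast 2 (Kd δ)]
    exact Real.rpow_le_rpow_of_exponent_le (by norm_num) (Nat.le_ceil _)
  calc (11:ℝ) = (11/δ) * δ := by field_simp
    _ ≤ 2 ^ (Kd δ) * δ := mul_le_mul_of_nonneg_right h1 hδ0.le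

lemma Kd_le {δ : ℝ} (hδ0 : 0 < δ) (hδ : δ < 1/2) :
    (Kd δ : ℝ) + 1 ≤ (Real.log 11 / Real.log 2 + 3) / Real.log 2 * Real.log (1/δ) := by
  set L := Real.log (1/δ) with hL
  have h2L : Real.log 2 ≤ L := Real.log_le_log (by norm_num) (by rw [le_div_iff₀ hδ0]; linarith)
  have hl2 : (0:ℝ) < Real.log 2 := Real.log_pos (by norm_num)
  have hl11 : (0:ℝ) < Real.log 11 := Real.log_pos (by norm_num)
  have hlogb : Real.logb 2 (11/δ) = (Real.log 11 + L)/Real.log 2 := by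
    rw [Real.logb, Real.log_div (by norm_num) (ne_of_gt hδ0)]
    rw [hL, Real.log_div (by norm_num) (ne_of_gt hδ0), Real.log_one]
    ring
  have hL0 : 0 < L := lt_of_lt_of_le hl2 h2L
  have hlogb0 : 0 ≤ Real.logb 2 (11/δ) := by
    rw [hlogb]; exact div_nonneg (by linarith) hl2.le
  have hKd : (Kd δ : ℝ) ≤ Real.logb 2 (11/δ) + 1 := le_of_lt (Nat.ceil_lt_add_one hlogb0)
  rw [hlogb] at hKd
  have hdiv : (1:ℝ) ≤ L / Real.log 2 := (one_le_div hl2).2 h2L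
  have e1 : Real.log 11 / Real.log 2 ≤ (Real.log 11 / Real.log 2) * (L / Real.log 2) :=
    le_mul_of_one_le_right (by positivity) hdiv
  have e2 : (2:ℝ) ≤ 2 * (L / Real.log 2) := by linarith
  have e3 : L / Real.log 2 ≤ L / Real.log 2 := le_refl _
  have hexp : (Real.log 11 / Real.log 2 + 3) / Real.log 2 * L
      = (Real.log 11 / Real.log 2) * (L / Real.log 2) + 3 * (L / Real.log 2) := by
    field_simp
  rw [hexp]
  have hKd' : (Kd δ : ℝ) + 1 ≤ Real.log 11 / Real.log 2 + L / Real.log 2 + 2 := by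
    have : (Real.log 11 + L)/Real.log 2 = Real.log 11 / Real.log 2 + L / Real.log 2 := by ring
    linarith [hKd, this ▸ hKd]
  linarith

lemma dyadic_count {A δ : ℝ} (hδ0 : 0 < δ) (hδ : δ < 1/2) (I : Finset ℕ) (D : ℕ → ℝ)
    (hD0 : ∀ j ∈ I, 0 ≤ D j) (hD10 : ∀ j ∈ I, D j ≤ 10)
    (hA : 0 ≤ A)
    (hcard : ∀ ρ : ℝ, δ ≤ ρ → ((I.filter (fun j => D j ≤ ρ)).card : ℝ) ≤ A * ρ) :
    ∑ j ∈ I, 1/(D j + δ) ≤ 2*A*(Kd δ + 1) := by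
  set K := Kd δ with hK
  have hstep : ∀ j ∈ I, 1/(D j + δ) ≤
      ∑ k ∈ Finset.range (K+1), (if D j + δ ≤ 2^(k+1)*δ then 1/(2^k*δ) else 0) := by
    intro j hj
    have hDj0 := hD0 j hj
    have hDj10 := hD10 j hj
    have hPK : D j + δ ≤ 2^(K+1)*δ := by
      have h1 : (11:ℝ) ≤ 2^K * δ := Kd_pow hδ0
      have h2 : (2:ℝ)^K * δ ≤ 2^(K+1)*δ := by
        have : (2:ℝ)^K ≤ 2^(K+1) := by
          apply pow_le_pow_right₀ (by norm_num); omega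
        exact mul_le_mul_of_nonneg_right this hδ0.le
      linarith
    have hex : ∃ k, D j + δ ≤ 2^(k+1)*δ := ⟨K, hPK⟩
    set k₀ := Nat.find hex with hk₀
    have hk₀le : k₀ ≤ K := Nat.find_le hPK
    have hk₀P : D j + δ ≤ 2^(k₀+1)*δ := Nat.find_spec hex
    have hterm : 1/(D j + δ) ≤ (if D j + δ ≤ 2^(k₀+1)*δ then 1/((2:ℝ)^k₀*δ) else 0) := by
      rw [if_pos hk₀P]
      have hlow : (2:ℝ)^k₀ * δ ≤ D j + δ := by
        rcases Nat.eq_zero_or_pos k₀ with h0 | hpos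
        · rw [h0]; norm_num; linarith
        · obtain ⟨l, hl⟩ := Nat.exists_eq_succ_of_ne_zero hpos.ne'
          have hmin := Nat.find_min hex (m := l) (by omega)
          push_neg at hmin
          rw [hl]
          have h2l : ((2:ℝ)^(l+1)*δ < D j + δ) := hmin
          calc (2:ℝ)^(Nat.succ l) * δ = 2^(l+1) * δ := by norm_num
            _ ≤ D j + δ := h2l.le
      exact one_div_le_one_div_of_le (by positivity) hlow
    calc 1/(D j + δ) ≤ (if D j + δ ≤ 2^(k₀+1)*δ then 1/((2:ℝ)^k₀*δ) else 0) := hterm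
      _ ≤ ∑ k ∈ Finset.range (K+1), (if D j + δ ≤ 2^(k+1)*δ then 1/(2^k*δ) else 0) := by
          refine Finset.single_le_sum (f := fun k => (if D j + δ ≤ 2^(k+1)*δ then 1/((2:ℝ)^k*δ) else 0)) ?_ ?_
          · intro k _; positivity
          · exact Finset.mem_range.2 (by omega)
  calc ∑ j ∈ I, 1/(D j + δ)
      ≤ ∑ j ∈ I, ∑ k ∈ Finset.range (K+1), (if D j + δ ≤ 2^(k+1)*δ then 1/(2^k*δ) else 0) :=
        Finset.sum_le_sum hstep
    _ = ∑ k ∈ Finset.range (K+1), ∑ j ∈ I, (if D j + δ ≤ 2^(k+1)*δ then 1/(2^k*δ) else 0) :=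
        Finset.sum_comm
    _ ≤ ∑ k ∈ Finset.range (K+1), 2*A := by
        refine Finset.sum_le_sum fun k _ => ?_
        have hsum : ∑ j ∈ I, (if D j + δ ≤ 2^(k+1)*δ then 1/((2:ℝ)^k*δ) else 0)
            = ((I.filter (fun j => D j + δ ≤ 2^(k+1)*δ)).card : ℝ) * (1/((2:ℝ)^k*δ)) := by
          rw [← Finset.sum_filter, Finset.sum_const, nsmul_eq_mul]
        rw [hsum]
        have hfeq : I.filter (fun j => D j + δ ≤ 2^(k+1)*δ)
            = I.filter (fun j => D j ≤ 2^(k+1)*δ - δ) := by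
          apply Finset.filter_congr
          intro j _
          constructor <;> intro h <;> simp_all <;> linarith
        have h2k : (2:ℝ) ≤ 2^(k+1) := by
          calc (2:ℝ) = 2^1 := (pow_one 2).symm
            _ ≤ 2^(k+1) := pow_le_pow_right₀ (by norm_num) (by omega)
        have hρ : δ ≤ 2^(k+1)*δ - δ := by nlinarith
        have hc : ((I.filter (fun j => D j + δ ≤ 2^(k+1)*δ)).card : ℝ) ≤ A * (2^(k+1)*δ) := by
          rw [hfeq]
          refine (hcard _ hρ).trans ?_
          have : A * (2^(k+1)*δ - δ) ≤ A * (2^(k+1)*δ) := by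
            refine mul_le_mul_of_nonneg_left (by linarith) hA
          linarith
        calc ((I.filter (fun j => D j + δ ≤ 2^(k+1)*δ)).card : ℝ) * (1/((2:ℝ)^k*δ))
            ≤ (A * (2^(k+1)*δ)) * (1/((2:ℝ)^k*δ)) :=
              mul_le_mul_of_nonneg_right hc (by positivity)
          _ = 2*A := by
              rw [pow_succ]
              field_simp
    _ = 2*A*(K+1) := by
        rw [Finset.sum_const, Finset.card_range]
        push_cast; ring

lemma ind_mul {α : Type*} (Ei Ej : Set α) (ai aj : ℝ) (w : α) :
    ENNReal.ofReal ((ai * Ei.indicator (fun _ => (1:ℝ)) w) * (aj * Ej.indicator (fun _ => (1:ℝ)) w))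
      = (Ei ∩ Ej).indicator (fun _ => ENNReal.ofReal (ai*aj)) w := by
  by_cases hi : w ∈ Ei <;> by_cases hj : w ∈ Ej <;>
    simp [Set.indicator_apply, hi, hj]

set_option maxHeartbeats 2000000 in
/-- Let `n ≥ 3`. There is `C = C(n)` such that: for every
`0 < δ < 1/2` and `A > 0`, and every finite collection of spheres `S_i = S(x_i,t_i)`
in `ℝⁿ` with radii `t_i ∈ [1/2, 2]` satisfying the non-concentration condition
`#{i : (x_i, t_i) ∈ B_ρ} ≤ A ρ` for every ball `B_ρ ⊆ ℝⁿ × ℝ` of radius `ρ ≥ δ`,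
and for all nonnegative coefficients `a_i`,
`‖Σ_i a_i 1_{S_i^δ}‖_{L²(ℝⁿ)} ≤ C δ log(1/δ) A^{1/2} (Σ_i a_i²)^{1/2}`. -/
theorem stmt17 (n : ℕ) (hn : 3 ≤ n) :
    ∃ C : ℝ, 0 < C ∧
      ∀ (δ A : ℝ), 0 < δ → δ < 1/2 → 0 < A →
      ∀ (I : Finset ℕ) (x : ℕ → EuclideanSpace ℝ (Fin n)) (t : ℕ → ℝ),
        (∀ i ∈ I, t i ∈ Set.Icc (1/2 : ℝ) 2) →
        (∀ (z : EuclideanSpace ℝ (Fin n) × ℝ) (ρ : ℝ), δ ≤ ρ →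
          ((I.filter (fun i => dist (x i, t i) z ≤ ρ)).card : ℝ) ≤ A * ρ) →
      ∀ (a : ℕ → ℝ), (∀ i, 0 ≤ a i) →
        eLpNorm
          (fun w => ∑ i ∈ I, a i *
            ({y : EuclideanSpace ℝ (Fin n) |
                t i - δ ≤ dist y (x i) ∧ dist y (x i) ≤ t i + δ}.indicator
              (fun _ => (1 : ℝ)) w)) 2 volume ≤
        ENNReal.ofReal (C * δ * Real.log (1 / δ) * Real.sqrt A *
          Real.sqrt (∑ i ∈ I, (a i) ^ 2)) := by
  obtain ⟨m, rfl⟩ : ∃ m, n = m + 3 := ⟨n - 3, by omega⟩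
  set c3 : ℝ := (Real.log 11 / Real.log 2 + 3) / Real.log 2 with hc3def
  have hl2 : (0:ℝ) < Real.log 2 := Real.log_pos (by norm_num)
  have hl11 : (0:ℝ) < Real.log 11 := Real.log_pos (by norm_num)
  have hc3 : 0 < c3 := by rw [hc3def]; positivity
  set C : ℝ := max 1 (Real.sqrt (4 * cG m * c3 / Real.log 2)) with hCdef
  have hC1 : (1:ℝ) ≤ C := le_max_left _ _
  refine ⟨C, lt_of_lt_of_le one_pos hC1, ?_⟩
  intro δ A hδ0 hδhalf hA I x t ht hcount a ha
  set L := Real.log (1/δ) with hLdef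
  have hL2 : Real.log 2 ≤ L := Real.log_le_log (by norm_num) (by rw [le_div_iff₀ hδ0]; linarith)
  have hLpos : 0 < L := lt_of_lt_of_le hl2 hL2
  set E : ℕ → Set (EuclideanSpace ℝ (Fin (m+3))) := fun i =>
    {y : EuclideanSpace ℝ (Fin (m+3)) | t i - δ ≤ dist y (x i) ∧ dist y (x i) ≤ t i + δ} with hE
  have hEmeas : ∀ i, MeasurableSet (E i) := by
    intro i
    have hd : Measurable fun y : EuclideanSpace ℝ (Fin (m+3)) => dist y (x i) :=
      (continuous_id.dist continuous_const).measurable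
    exact (measurableSet_le measurable_const hd).inter (measurableSet_le hd measurable_const)
  set f : EuclideanSpace ℝ (Fin (m+3)) → ℝ :=
    fun w => ∑ i ∈ I, a i * (E i).indicator (fun _ => (1:ℝ)) w with hf
  show eLpNorm f 2 volume ≤ _
  set B : ℝ := C * δ * L * Real.sqrt A * Real.sqrt (∑ i ∈ I, (a i) ^ 2) with hB
  have hSig : (0:ℝ) ≤ ∑ i ∈ I, (a i)^2 := Finset.sum_nonneg fun i _ => sq_nonneg _
  have hBnn : 0 ≤ B := by
    rw [hB]
    have : (0:ℝ) ≤ C := by linarith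
    positivity
  rw [eLpNorm_eq_lintegral_rpow_enorm_toReal (by norm_num) (by norm_num)]
  simp only [enorm_eq_nnnorm]
  have htoReal : (2:ℝ≥0∞).toReal = (2:ℝ) := by norm_num
  rw [htoReal]
  suffices hmain : ∫⁻ w, ((‖f w‖₊ : ℝ≥0∞)) ^ (2:ℝ) ∂volume ≤ (ENNReal.ofReal B)^(2:ℕ) by
    calc (∫⁻ w, ((‖f w‖₊ : ℝ≥0∞)) ^ (2:ℝ) ∂volume) ^ ((1:ℝ)/2)
        ≤ ((ENNReal.ofReal B)^(2:ℕ)) ^ ((1:ℝ)/2) := ENNReal.rpow_le_rpow hmain (by norm_num)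
      _ = ENNReal.ofReal B := by
          rw [← ENNReal.rpow_natCast (ENNReal.ofReal B) 2, ← ENNReal.rpow_mul]
          norm_num
  -- pointwise expansion
  have hindnn : ∀ i w, (0:ℝ) ≤ a i * (E i).indicator (fun _ => (1:ℝ)) w := fun i w =>
    mul_nonneg (ha i) (Set.indicator_nonneg (fun _ _ => zero_le_one) w)
  have hfnn : ∀ w, 0 ≤ f w := fun w => Finset.sum_nonneg fun i _ => hindnn i w
  have hptw : ∀ w, ((‖f w‖₊ : ℝ≥0∞)) ^ (2:ℝ) =
      ∑ i ∈ I, ∑ j ∈ I, (E i ∩ E j).indicator (fun _ => ENNReal.ofReal (a i * a j)) w := by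
    intro w
    rw [show ((‖f w‖₊ : ℝ≥0∞)) = ENNReal.ofReal (f w) by
      rw [← enorm_eq_nnnorm, ← ofReal_norm, Real.norm_of_nonneg (hfnn w)]]
    rw [show (2:ℝ) = ((2:ℕ):ℝ) by norm_num, ENNReal.rpow_natCast]
    rw [← ENNReal.ofReal_pow (hfnn w)]
    have hexp : (f w)^2 = ∑ i ∈ I, ∑ j ∈ I,
        (a i * (E i).indicator (fun _ => (1:ℝ)) w) * (a j * (E j).indicator (fun _ => (1:ℝ)) w) := by
      rw [sq, hf]
      exact Finset.sum_mul_sum _ _ _ _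
    rw [hexp, ENNReal.ofReal_sum_of_nonneg (fun i _ =>
      Finset.sum_nonneg fun j _ => mul_nonneg (hindnn i w) (hindnn j w))]
    refine Finset.sum_congr rfl fun i _ => ?_
    rw [ENNReal.ofReal_sum_of_nonneg (fun j _ => mul_nonneg (hindnn i w) (hindnn j w))]
    exact Finset.sum_congr rfl fun j _ => ind_mul _ _ _ _ w
  rw [lintegral_congr hptw]
  rw [lintegral_finset_sum _ (fun i _ => Finset.measurable_sum _ (fun j _ =>
    Measurable.indicator measurable_const ((hEmeas i).inter (hEmeas j))))]
  have hswap : ∀ i ∈ I, ∫⁻ w, (∑ j ∈ I, (E i ∩ E j).indicator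
      (fun _ => ENNReal.ofReal (a i * a j)) w) ∂volume
      = ∑ j ∈ I, ENNReal.ofReal (a i * a j) * volume (E i ∩ E j) := by
    intro i _
    rw [lintegral_finset_sum _ (fun j _ =>
      Measurable.indicator measurable_const ((hEmeas i).inter (hEmeas j)))]
    exact Finset.sum_congr rfl fun j _ =>
      lintegral_indicator_const ((hEmeas i).inter (hEmeas j)) _
  rw [Finset.sum_congr rfl hswap]
  -- inner bound
  set W : ℝ := cG m * δ^2 * (2*A*((Kd δ : ℝ) + 1)) with hW
  have hcGnn := cG_nonneg m
  have hWnn : 0 ≤ W := by rw [hW]; positivity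
  have hinner : ∀ i ∈ I, ∑ j ∈ I, volume (E i ∩ E j) ≤ ENNReal.ofReal W := by
    intro i hi
    have hti := ht i hi
    set z : EuclideanSpace ℝ (Fin (m+3)) × ℝ := (x i, t i) with hz
    set D : ℕ → ℝ := fun j => dist (x j, t j) z with hD
    have hDfun : ∀ j, D j = max (dist (x i) (x j)) |t i - t j| := by
      intro j
      simp only [hD, hz, Prod.dist_eq, Real.dist_eq]
      rw [dist_comm (x j) (x i), abs_sub_comm]
    have hD0 : ∀ j, 0 ≤ D j := fun j => dist_nonneg
    have hset : ∀ j, E i ∩ E j = {y : EuclideanSpace ℝ (Fin (m+3)) |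
        t i - δ ≤ dist y (x i) ∧ dist y (x i) ≤ t i + δ ∧
          t j - δ ≤ dist y (x j) ∧ dist y (x j) ≤ t j + δ} := by
      intro j; ext y
      simp only [hE, Set.mem_inter_iff, Set.mem_setOf_eq]
      tauto
    have hbound : ∀ j ∈ I, volume (E i ∩ E j) ≤
        ENNReal.ofReal (cG m * δ^2 * (1/(D j + δ))) := by
      intro j hj
      rw [hset j]
      refine (keyG m hδ0 hδhalf hti.1 hti.2 (ht j hj).1 (ht j hj).2 (x i) (x j)).trans
        (le_of_eq ?_)
      rw [mul_one_div, hDfun j]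
    have hjempty : ∀ j ∈ I, ¬ (D j ≤ 10) → volume (E i ∩ E j) = 0 := by
      intro j hj hDj
      have hem : E i ∩ E j = ∅ := by
        ext y
        simp only [hE, Set.mem_inter_iff, Set.mem_setOf_eq, Set.mem_empty_iff_false, iff_false]
        rintro ⟨⟨h1, h2⟩, h3, h4⟩
        refine hDj ?_
        rw [hDfun j]
        have htj := ht j hj
        obtain ⟨hti1, hti2⟩ := hti
        obtain ⟨htj1, htj2⟩ := htj
        have hd5 : dist (x i) (x j) ≤ 5 := by
          calc dist (x i) (x j) ≤ dist y (x i) + dist y (x j) := dist_triangle_left _ _ _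
            _ ≤ (t i + δ) + (t j + δ) := add_le_add h2 h4
            _ ≤ 5 := by linarith
        have ht5 : |t i - t j| ≤ 5 := abs_le.2 ⟨by linarith, by linarith⟩
        exact (max_le hd5 ht5).trans (by norm_num)
      rw [hem]
      exact measure_empty
    have hsplit : ∑ j ∈ I, volume (E i ∩ E j)
        = ∑ j ∈ I.filter (fun j => D j ≤ 10), volume (E i ∩ E j) := by
      rw [Finset.sum_filter]
      refine Finset.sum_congr rfl fun j hj => ?_
      by_cases h : D j ≤ 10
      · rw [if_pos h]
      · rw [if_neg h, hjempty j hj h]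
    have hdyadic : ∑ j ∈ I.filter (fun j => D j ≤ 10), 1/(D j + δ)
        ≤ 2*A*((Kd δ : ℝ) + 1) := by
      refine dyadic_count hδ0 hδhalf _ D (fun j _ => hD0 j)
        (fun j hj => (Finset.mem_filter.1 hj).2) hA.le ?_
      intro ρ hρ
      refine le_trans ?_ (hcount z ρ hρ)
      have hsubf : (I.filter (fun j => D j ≤ 10)).filter (fun j => D j ≤ ρ)
          ⊆ I.filter (fun j => dist (x j, t j) z ≤ ρ) := by
        intro j hj
        simp only [Finset.mem_filter] at hj ⊢
        exact ⟨hj.1.1, hj.2⟩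
      exact_mod_cast Nat.cast_le.2 (Finset.card_le_card hsubf)
    rw [hsplit]
    have hpos : ∀ j, (0:ℝ) ≤ 1/(D j + δ) := fun j =>
      le_of_lt (one_div_pos.2 (by have := hD0 j; linarith))
    calc ∑ j ∈ I.filter (fun j => D j ≤ 10), volume (E i ∩ E j)
        ≤ ∑ j ∈ I.filter (fun j => D j ≤ 10),
            ENNReal.ofReal (cG m * δ^2 * (1/(D j + δ))) :=
          Finset.sum_le_sum fun j hj => hbound j (Finset.mem_filter.1 hj).1
      _ = ∑ j ∈ I.filter (fun j => D j ≤ 10),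
            ENNReal.ofReal (cG m * δ^2) * ENNReal.ofReal (1/(D j + δ)) := by
          refine Finset.sum_congr rfl fun j _ => ?_
          rw [← ENNReal.ofReal_mul (by positivity)]
      _ = ENNReal.ofReal (cG m * δ^2) *
            ENNReal.ofReal (∑ j ∈ I.filter (fun j => D j ≤ 10), 1/(D j + δ)) := by
          rw [← Finset.mul_sum, ENNReal.ofReal_sum_of_nonneg (fun j _ => hpos j)]
      _ ≤ ENNReal.ofReal (cG m * δ^2) * ENNReal.ofReal (2*A*((Kd δ : ℝ) + 1)) :=
          mul_le_mul_right (ENNReal.ofReal_le_ofReal hdyadic) _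
      _ = ENNReal.ofReal W := by
          rw [← ENNReal.ofReal_mul (by positivity), hW]
  -- AM-GM and symmetry
  have hsym : ∑ i ∈ I, ∑ j ∈ I, ENNReal.ofReal (a i * a j) * volume (E i ∩ E j) ≤
      2 * ∑ i ∈ I, ENNReal.ofReal ((a i)^2) * (∑ j ∈ I, volume (E i ∩ E j)) := by
    have hij : ∀ i j : ℕ, ENNReal.ofReal (a i * a j) ≤
        ENNReal.ofReal ((a i)^2) + ENNReal.ofReal ((a j)^2) := by
      intro i j
      refine le_trans (ENNReal.ofReal_le_ofReal
        (by nlinarith [sq_nonneg (a i - a j)] : a i * a j ≤ (a i)^2 + (a j)^2)) ?_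
      rw [ENNReal.ofReal_add (sq_nonneg _) (sq_nonneg _)]
    calc ∑ i ∈ I, ∑ j ∈ I, ENNReal.ofReal (a i * a j) * volume (E i ∩ E j)
        ≤ ∑ i ∈ I, ∑ j ∈ I, (ENNReal.ofReal ((a i)^2) + ENNReal.ofReal ((a j)^2))
            * volume (E i ∩ E j) :=
          Finset.sum_le_sum fun i _ => Finset.sum_le_sum fun j _ =>
            mul_le_mul_left (hij i j) _
      _ = (∑ i ∈ I, ∑ j ∈ I, ENNReal.ofReal ((a i)^2) * volume (E i ∩ E j)) +
          (∑ i ∈ I, ∑ j ∈ I, ENNReal.ofReal ((a j)^2) * volume (E i ∩ E j)) := by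
          rw [← Finset.sum_add_distrib]
          refine Finset.sum_congr rfl fun i _ => ?_
          rw [← Finset.sum_add_distrib]
          exact Finset.sum_congr rfl fun j _ => add_mul _ _ _
      _ = (∑ i ∈ I, ENNReal.ofReal ((a i)^2) * (∑ j ∈ I, volume (E i ∩ E j))) +
          (∑ i ∈ I, ENNReal.ofReal ((a i)^2) * (∑ j ∈ I, volume (E i ∩ E j))) := by
          congr 1
          · exact Finset.sum_congr rfl fun i _ => (Finset.mul_sum _ _ _).symm
          · rw [Finset.sum_comm]
            refine Finset.sum_congr rfl fun j _ => ?_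
            rw [Finset.mul_sum]
            exact Finset.sum_congr rfl fun i _ => by rw [Set.inter_comm]
      _ = 2 * ∑ i ∈ I, ENNReal.ofReal ((a i)^2) * (∑ j ∈ I, volume (E i ∩ E j)) :=
          (two_mul _).symm
  refine hsym.trans ?_
  have hstep2 : ∑ i ∈ I, ENNReal.ofReal ((a i)^2) * (∑ j ∈ I, volume (E i ∩ E j)) ≤
      ∑ i ∈ I, ENNReal.ofReal ((a i)^2) * ENNReal.ofReal W :=
    Finset.sum_le_sum fun i hi => mul_le_mul_right (hinner i hi) _
  have hsum_ofReal : ∑ i ∈ I, ENNReal.ofReal ((a i)^2) * ENNReal.ofReal W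
      = ENNReal.ofReal (∑ i ∈ I, (a i)^2) * ENNReal.ofReal W := by
    rw [← Finset.sum_mul, ← ENNReal.ofReal_sum_of_nonneg (fun i _ => sq_nonneg _)]
  have hfin : (2:ℝ≥0∞) * ∑ i ∈ I, ENNReal.ofReal ((a i)^2) * (∑ j ∈ I, volume (E i ∩ E j))
      ≤ ENNReal.ofReal (2 * (∑ i ∈ I, (a i)^2) * W) := by
    calc (2:ℝ≥0∞) * ∑ i ∈ I, ENNReal.ofReal ((a i)^2) * (∑ j ∈ I, volume (E i ∩ E j))
        ≤ (2:ℝ≥0∞) * (ENNReal.ofReal (∑ i ∈ I, (a i)^2) * ENNReal.ofReal W) := by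
          exact mul_le_mul_right (hstep2.trans (le_of_eq hsum_ofReal)) _
      _ = ENNReal.ofReal (2 * (∑ i ∈ I, (a i)^2) * W) := by
          rw [ENNReal.ofReal_mul (mul_nonneg (by norm_num) hSig),
            ENNReal.ofReal_mul (by norm_num : (0:ℝ) ≤ 2)]
          simp [ENNReal.ofReal_ofNat, mul_assoc]
  refine hfin.trans ?_
  -- final real arithmetic
  rw [← ENNReal.ofReal_pow hBnn]
  refine ENNReal.ofReal_le_ofReal ?_
  have h1 : (Kd δ : ℝ) + 1 ≤ c3 * L := Kd_le hδ0 hδhalf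
  have harg : (0:ℝ) ≤ 4 * cG m * c3 / Real.log 2 := by positivity
  have hC2 : 4 * cG m * c3 / Real.log 2 ≤ C^2 := by
    have h2 : Real.sqrt (4 * cG m * c3 / Real.log 2) ≤ C := le_max_right _ _
    calc 4 * cG m * c3 / Real.log 2 = (Real.sqrt (4 * cG m * c3 / Real.log 2))^2 :=
          (Real.sq_sqrt harg).symm
      _ ≤ C^2 := pow_le_pow_left₀ (Real.sqrt_nonneg _) h2 2
  have hcore : 4 * cG m * ((Kd δ:ℝ)+1) ≤ C^2 * L^2 := by
    have e0 : 0 ≤ 4 * cG m := by linarith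
    calc 4 * cG m * ((Kd δ:ℝ)+1) ≤ 4 * cG m * (c3 * L) := mul_le_mul_of_nonneg_left h1 e0
      _ = (4 * cG m * c3 / Real.log 2) * Real.log 2 * L := by
          rw [div_mul_cancel₀ _ (ne_of_gt hl2)]
          ring
      _ ≤ (4 * cG m * c3 / Real.log 2) * L * L := by
          refine mul_le_mul_of_nonneg_right (mul_le_mul_of_nonneg_left hL2 harg) hLpos.le
      _ ≤ C^2 * L * L := by
          refine mul_le_mul_of_nonneg_right (mul_le_mul_of_nonneg_right hC2 hLpos.le) hLpos.le
      _ = C^2 * L^2 := by ring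
  have hBsq : B^2 = C^2 * δ^2 * L^2 * A * (∑ i ∈ I, (a i)^2) := by
    rw [hB]
    rw [mul_pow, mul_pow, mul_pow, mul_pow, Real.sq_sqrt hA.le, Real.sq_sqrt hSig]
  rw [hBsq, hW]
  have hfact : 2 * (∑ i ∈ I, (a i)^2) * (cG m * δ^2 * (2*A*((Kd δ:ℝ)+1)))
      = (4 * cG m * ((Kd δ:ℝ)+1)) * (A * δ^2 * (∑ i ∈ I, (a i)^2)) := by ring
  rw [hfact]
  calc (4 * cG m * ((Kd δ:ℝ)+1)) * (A * δ^2 * (∑ i ∈ I, (a i)^2))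
      ≤ (C^2 * L^2) * (A * δ^2 * (∑ i ∈ I, (a i)^2)) := by
        refine mul_le_mul_of_nonneg_right hcore (by positivity)
    _ = C^2 * δ^2 * L^2 * A * (∑ i ∈ I, (a i)^2) := by ring
end
end
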